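/- For n ≥ 2 players, there is no anonymous age-based acknowledgment-based protocol f that is in equilibrium and for which the expected latency of each player using f (when all players use f) is finite. -/

import Mathlib

open scoped ENNReal

namespace Contention

/-- An acknowledgment-based protocol: maps a player's personal transmission history
(the list of her own past transmission indicators, oldest slot first) to the
probability of transmitting in the next slot. -/
abbrev Protocol : Type := List Bool → ℝ

/-- A protocol is valid if it always prescribes a probability in `[0,1]`. -/
def ValidProtocol (f : Protocol) : Prop := ∀ h : List Bool, 0 ≤ f h ∧ f h ≤ 1

/-- A joint transmission history: the list of transmission vectors, oldest slot first. -/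
abbrev Hist (n : ℕ) : Type := List (Fin n → Bool)

/-- The personal transmission history of player `i` extracted from a joint history. -/
def personal {n : ℕ} (h : Hist n) (i : Fin n) : List Bool := h.map fun v => v i

/-- Player `i` transmits alone (hence successfully) in the slot with transmission vector `v`. -/
def alone {n : ℕ} (v : Fin n → Bool) (i : Fin n) : Prop :=
  v i = true ∧ ∀ j : Fin n, j ≠ i → v j = false

instance {n : ℕ} (v : Fin n → Bool) (i : Fin n) : Decidable (alone v i) := by
  unfold alone; infer_instance

/-- Player `i` is still pending after joint history `h` (she never transmitted alone). -/
def pending {n : ℕ} (h : Hist n) (i : Fin n) : Prop := ∀ v ∈ h, ¬ alone v i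

instance {n : ℕ} (h : Hist n) (i : Fin n) : Decidable (pending h i) := by
  unfold pending; infer_instance

/-- Probability that the next slot has transmission vector `v`, given joint history `h`:
each pending player transmits independently with the probability her protocol assigns to
her personal history, and players that already succeeded stay quiet. -/
noncomputable def stepProb {n : ℕ} (F : Fin n → Protocol) (h : Hist n) (v : Fin n → Bool) : ℝ :=
  ∏ i : Fin n,
    if pending h i then
      (if v i = true then F i (personal h i) else 1 - F i (personal h i))
    else
      (if v i = true then 0 else 1)

/-- Probability that, starting after joint history `h`, the next `e.length` slots produce
exactly the extension `e`. -/
noncomputable def contProb {n : ℕ} (F : Fin n → Protocol) (h e : Hist n) : ℝ :=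
  ∏ t ∈ Finset.range e.length, stepProb F (h ++ e.take t) (e.getD t fun _ => false)

/-- Probability that the first `h.length` slots produce exactly the joint history `h`. -/
noncomputable def histProb {n : ℕ} (F : Fin n → Protocol) (h : Hist n) : ℝ := contProb F [] h

/-- Conditional probability, given joint history `h`, that player `i` is still pending
after `s` further slots. -/
noncomputable def condPendProb {n : ℕ} (F : Fin n → Protocol) (h : Hist n) (i : Fin n)
    (s : ℕ) : ℝ :=
  ∑ e : Fin s → Fin n → Bool,
    if pending (h ++ List.ofFn e) i then contProb F h (List.ofFn e) else 0

/-- Conditional expected latency `E[Tᵢ | h]` of player `i` given joint history `h`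
(`Tᵢ` is the first slot in which `i` transmits alone), computed via
`E[Tᵢ | h] = ∑_{s ≥ 0} Pr(Tᵢ > s | h)`; for `s ≤ h.length` the event `Tᵢ > s` is
determined by `h`, and for larger `s` its probability is `condPendProb`. -/
noncomputable def condLatency {n : ℕ} (F : Fin n → Protocol) (h : Hist n) (i : Fin n) : ℝ≥0∞ :=
  ∑' s : ℕ,
    if s ≤ h.length then (if pending (h.take s) i then 1 else 0)
    else ENNReal.ofReal (condPendProb F h i (s - h.length))

/-- Conditional expected number of further slots until player `i` succeeds, given joint
history `h` (the slot of the successful transmission itself is counted). -/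
noncomputable def condRemaining {n : ℕ} (F : Fin n → Protocol) (h : Hist n) (i : Fin n) : ℝ≥0∞ :=
  ∑' s : ℕ, ENNReal.ofReal (condPendProb F h i s)

/-- A profile of protocols is in equilibrium if after no joint history (arising with
positive probability) can a player strictly decrease her conditional expected latency
by unilaterally switching to another (valid) protocol. -/
def IsEquilibrium {n : ℕ} (F : Fin n → Protocol) : Prop :=
  ∀ i : Fin n, ∀ h : Hist n, 0 < histProb F h →
    ∀ g : Protocol, ValidProtocol g →
      condLatency F h i ≤ condLatency (Function.update F i g) h i

end Contention

namespace Contention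

/-- An age-based protocol: the transmission probability in slot `t` (that is, after a
personal history of length `t − 1`) is `p t`, depending only on the time `t ≥ 1`. -/
def ageProtocol (p : ℕ → ℝ) : Protocol := fun h => p (h.length + 1)

end Contention

namespace Contention

-- ====================== auxiliary general lemmas ======================

abbrev Vec (n : ℕ) := Fin n → Bool

variable {n : ℕ}

lemma pending_nil (i : Fin n) : pending ([] : Hist n) i := by simp [pending]

lemma pending_concat {h : Hist n} {v : Vec n} {i : Fin n} :
    pending (h ++ [v]) i ↔ pending h i ∧ ¬ alone v i := by
  simp [pending, or_imp, forall_and]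

lemma pending_append_left {h h' : Hist n} {i : Fin n} (hp : pending (h ++ h') i) :
    pending h i := fun v hv => hp v (List.mem_append_left _ hv)

lemma stepProb_nonneg {F : Fin n → Protocol} (hF : ∀ i, ValidProtocol (F i))
    (h : Hist n) (v : Vec n) : 0 ≤ stepProb F h v := by
  apply Finset.prod_nonneg
  intro i _
  rcases hF i (personal h i) with ⟨h0, h1⟩
  split_ifs <;> simp_all <;> linarith

lemma contProb_nil (F : Fin n → Protocol) (h : Hist n) : contProb F h [] = 1 := by
  simp [contProb]

lemma contProb_cons (F : Fin n → Protocol) (h : Hist n) (v : Vec n) (l : Hist n) :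
    contProb F h (v :: l) = stepProb F h v * contProb F (h ++ [v]) l := by
  unfold contProb
  rw [List.length_cons, Finset.prod_range_succ', mul_comm]
  have h2 : ∀ t ∈ Finset.range l.length,
      stepProb F (h ++ (v :: l).take (t+1)) ((v::l).getD (t+1) (fun _ => false))
        = stepProb F ((h ++ [v]) ++ l.take t) (l.getD t (fun _ => false)) := by
    intro t _
    rw [List.take_succ_cons, List.getD_cons_succ, List.append_cons]
  rw [Finset.prod_congr rfl h2]
  have h3 : stepProb F (h ++ (v :: l).take 0) ((v::l).getD 0 (fun _ => false))
      = stepProb F h v := by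
    rw [List.take_zero, List.append_nil, List.getD_cons_zero]
  rw [h3]

lemma contProb_concat (F : Fin n → Protocol) (c h : Hist n) (v : Vec n) :
    contProb F c (h ++ [v]) = contProb F c h * stepProb F (c ++ h) v := by
  unfold contProb
  have hl : (h ++ [v]).length = h.length + 1 := by simp
  rw [hl, Finset.prod_range_succ]
  have h2 : ∀ t ∈ Finset.range h.length,
      stepProb F (c ++ (h ++ [v]).take t) ((h ++ [v]).getD t (fun _ => false))
        = stepProb F (c ++ h.take t) (h.getD t (fun _ => false)) := by
    intro t ht
    rw [Finset.mem_range] at ht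
    rw [List.take_append_of_le_length (le_of_lt ht), List.getD_append _ _ _ _ ht]
  rw [Finset.prod_congr rfl h2]
  have h3 : stepProb F (c ++ (h ++ [v]).take h.length) ((h ++ [v]).getD h.length (fun _ => false))
      = stepProb F (c ++ h) v := by
    rw [List.take_append_of_le_length le_rfl, List.take_length,
      List.getD_append_right _ _ _ _ le_rfl]
    simp
  rw [h3]

lemma contProb_nonneg {F : Fin n → Protocol} (hF : ∀ i, ValidProtocol (F i))
    (h e : Hist n) : 0 ≤ contProb F h e :=
  Finset.prod_nonneg fun _ _ => stepProb_nonneg hF _ _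

lemma histProb_nil (F : Fin n → Protocol) : histProb F ([] : Hist n) = 1 := contProb_nil F []

lemma histProb_concat (F : Fin n → Protocol) (h : Hist n) (v : Vec n) :
    histProb F (h ++ [v]) = histProb F h * stepProb F h v := by
  have := contProb_concat F [] h v
  simpa [histProb] using this

lemma sum_ofFn_succ {M : Type*} [AddCommMonoid M] (s : ℕ) (G : Hist n → M) :
    ∑ e : Fin (s+1) → Vec n, G (List.ofFn e)
      = ∑ v : Vec n, ∑ e : Fin s → Vec n, G (v :: List.ofFn e) := by
  rw [← Equiv.sum_comp (Fin.consEquiv (fun _ : Fin (s+1) => Vec n))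
    (fun e => G (List.ofFn e)), Fintype.sum_prod_type]
  refine Finset.sum_congr rfl fun v _ => Finset.sum_congr rfl fun e _ => ?_
  congr 1
  rw [List.ofFn_succ]
  simp [Fin.consEquiv]

lemma condPendProb_zero (F : Fin n → Protocol) (h : Hist n) (i : Fin n) :
    condPendProb F h i 0 = if pending h i then 1 else 0 := by
  unfold condPendProb
  rw [Fintype.sum_unique]
  simp [List.ofFn_zero, contProb_nil]

lemma condPendProb_succ (F : Fin n → Protocol) (h : Hist n) (i : Fin n) (s : ℕ) :
    condPendProb F h i (s+1)
      = ∑ v : Vec n, stepProb F h v * condPendProb F (h ++ [v]) i s := by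
  unfold condPendProb
  rw [sum_ofFn_succ s (fun l => if pending (h ++ l) i then contProb F h l else 0)]
  refine Finset.sum_congr rfl fun v _ => ?_
  rw [Finset.mul_sum]
  refine Finset.sum_congr rfl fun e _ => ?_
  rw [List.append_cons, contProb_cons, mul_ite, mul_zero]

lemma condPendProb_nonneg {F : Fin n → Protocol} (hF : ∀ i, ValidProtocol (F i))
    (h : Hist n) (i : Fin n) (s : ℕ) : 0 ≤ condPendProb F h i s := by
  apply Finset.sum_nonneg
  intro e _
  split_ifs
  · exact contProb_nonneg hF _ _
  · exact le_refl 0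

-- ====================== part 2 ======================

lemma condPendProb_transfer {F F' : Fin n → Protocol} :
    ∀ (s : ℕ) (h h' : Hist n), h.length = h'.length →
    (∀ j, pending h j ↔ pending h' j) →
    (∀ (j : Fin n) (l l' : List Bool), h.length ≤ l.length → l.length = l'.length →
      F j l = F' j l') →
    ∀ i, condPendProb F h i s = condPendProb F' h' i s := by
  intro s
  induction s with
  | zero =>
      intro h h' hlen hpend hagree i
      rw [condPendProb_zero, condPendProb_zero]
      by_cases hq : pending h i
      · rw [if_pos hq, if_pos ((hpend i).1 hq)]
      · rw [if_neg hq, if_neg (fun c => hq ((hpend i).2 c))]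
  | succ s ih =>
      intro h h' hlen hpend hagree i
      rw [condPendProb_succ, condPendProb_succ]
      refine Finset.sum_congr rfl fun v _ => ?_
      have hstep : stepProb F h v = stepProb F' h' v := by
        unfold stepProb
        refine Finset.prod_congr rfl fun j _ => ?_
        have hval : F j (personal h j) = F' j (personal h' j) := by
          apply hagree
          · simp [personal]
          · simp [personal, hlen]
        by_cases hq : pending h j
        · rw [if_pos hq, if_pos ((hpend j).1 hq), hval]
        · rw [if_neg hq, if_neg (fun c => hq ((hpend j).2 c))]
      rw [hstep, ih (h ++ [v]) (h' ++ [v]) (by simp [hlen])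
        (fun j => by rw [pending_concat, pending_concat, hpend j])
        (fun j l l' hl hll => hagree j l l' (by simp at hl ⊢; omega) hll) i]

lemma condRemaining_rec {F : Fin n → Protocol} (hF : ∀ i, ValidProtocol (F i))
    (h : Hist n) (i : Fin n) :
    condRemaining F h i = (if pending h i then 1 else 0)
      + ∑ v : Vec n, ENNReal.ofReal (stepProb F h v) * condRemaining F (h ++ [v]) i := by
  unfold condRemaining
  rw [tsum_eq_zero_add' ENNReal.summable]
  congr 1
  · rw [condPendProb_zero]; split_ifs <;> simp
  · calc ∑' s : ℕ, ENNReal.ofReal (condPendProb F h i (s+1))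
        = ∑' s : ℕ, ∑ v : Vec n,
            ENNReal.ofReal (stepProb F h v) * ENNReal.ofReal (condPendProb F (h++[v]) i s) := by
          refine tsum_congr fun s => ?_
          rw [condPendProb_succ, ENNReal.ofReal_sum_of_nonneg
            (fun v _ => mul_nonneg (stepProb_nonneg hF h v) (condPendProb_nonneg hF _ i s))]
          exact Finset.sum_congr rfl fun v _ => ENNReal.ofReal_mul (stepProb_nonneg hF h v)
      _ = ∑ v : Vec n, ∑' s : ℕ,
            ENNReal.ofReal (stepProb F h v) * ENNReal.ofReal (condPendProb F (h++[v]) i s) :=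
          (Summable.tsum_finsetSum (fun _ _ => ENNReal.summable))
      _ = ∑ v : Vec n, ENNReal.ofReal (stepProb F h v) * condRemaining F (h ++ [v]) i :=
          Finset.sum_congr rfl fun v _ => ENNReal.tsum_mul_left

lemma condPendProb_nonpending (F : Fin n → Protocol) {h : Hist n} {i : Fin n}
    (hnp : ¬ pending h i) (s : ℕ) : condPendProb F h i s = 0 := by
  unfold condPendProb
  refine Finset.sum_eq_zero fun e _ => ?_
  rw [if_neg (fun c => hnp (pending_append_left c))]

lemma condRemaining_nonpending (F : Fin n → Protocol) {h : Hist n} {i : Fin n}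
    (hnp : ¬ pending h i) : condRemaining F h i = 0 := by
  unfold condRemaining
  simp [condPendProb_nonpending F hnp]

lemma one_le_condRemaining (F : Fin n → Protocol) {h : Hist n} {i : Fin n}
    (hp : pending h i) : 1 ≤ condRemaining F h i := by
  have := ENNReal.le_tsum (f := fun s => ENNReal.ofReal (condPendProb F h i s)) 0
  rw [condPendProb_zero, if_pos hp] at this
  unfold condRemaining; simpa using this

lemma condLatency_add_pend (F : Fin n → Protocol) (h : Hist n) (i : Fin n) :
    condLatency F h i + (if pending h i then 1 else 0)
      = (∑ s ∈ Finset.range (h.length+1), if pending (h.take s) i then (1:ℝ≥0∞) else 0)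
        + condRemaining F h i := by
  unfold condLatency condRemaining
  rw [← Summable.sum_add_tsum_nat_add' (f := fun s =>
      if s ≤ h.length then (if pending (h.take s) i then (1:ℝ≥0∞) else 0)
      else ENNReal.ofReal (condPendProb F h i (s - h.length))) (k := h.length+1)
      ENNReal.summable]
  rw [tsum_eq_zero_add' (f := fun s => ENNReal.ofReal (condPendProb F h i s)) ENNReal.summable]
  have e1 : ∀ s ∈ Finset.range (h.length+1),
      (if s ≤ h.length then (if pending (h.take s) i then (1:ℝ≥0∞) else 0)
        else ENNReal.ofReal (condPendProb F h i (s - h.length)))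
      = (if pending (h.take s) i then (1:ℝ≥0∞) else 0) := by
    intro s hs
    rw [Finset.mem_range] at hs
    rw [if_pos (by omega)]
  rw [Finset.sum_congr rfl e1]
  have e2 : ∀ s : ℕ,
      (if s + (h.length+1) ≤ h.length then (if pending (h.take (s + (h.length+1))) i then (1:ℝ≥0∞) else 0)
        else ENNReal.ofReal (condPendProb F h i (s + (h.length+1) - h.length)))
      = ENNReal.ofReal (condPendProb F h i (s + 1)) := by
    intro s
    rw [if_neg (by omega)]
    congr 2
    omega
  rw [tsum_congr e2]
  rw [condPendProb_zero]
  have e3 : ENNReal.ofReal (if pending h i then (1:ℝ) else 0) = (if pending h i then (1:ℝ≥0∞) else 0) := by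
    split_ifs <;> simp
  rw [e3]
  ring

lemma equilibrium_remaining {F : Fin n → Protocol} (heq : IsEquilibrium F) {h : Hist n}
    (hh : 0 < histProb F h) {g : Protocol} (hg : ValidProtocol g) (i : Fin n) :
    condRemaining F h i ≤ condRemaining (Function.update F i g) h i := by
  have h1 := heq i h hh g hg
  have h2 := condLatency_add_pend F h i
  have h3 := condLatency_add_pend (Function.update F i g) h i
  have h4 : condLatency F h i + (if pending h i then 1 else 0)
      ≤ condLatency (Function.update F i g) h i + (if pending h i then 1 else 0) :=
    add_le_add_left h1 _
  rw [h2, h3] at h4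
  have hD : (∑ s ∈ Finset.range (h.length+1), if pending (h.take s) i then (1:ℝ≥0∞) else 0) ≠ ⊤ := by
    refine (ENNReal.sum_lt_top.mpr fun s _ => ?_).ne
    split_ifs <;> simp
  exact (ENNReal.add_le_add_iff_left hD).1 h4

lemma condPendProb_add (F : Fin n → Protocol) :
    ∀ (k : ℕ) (h : Hist n) (i : Fin n) (s : ℕ),
    condPendProb F h i (k + s)
      = ∑ e : Fin k → Vec n, contProb F h (List.ofFn e) * condPendProb F (h ++ List.ofFn e) i s := by
  intro k
  induction k with
  | zero =>
      intro h i s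
      rw [Fintype.sum_unique]
      simp [List.ofFn_zero, contProb_nil]
  | succ k ih =>
      intro h i s
      have harith : k + 1 + s = (k + s) + 1 := by omega
      rw [harith, condPendProb_succ]
      rw [sum_ofFn_succ k (fun l => contProb F h l * condPendProb F (h ++ l) i s)]
      refine Finset.sum_congr rfl fun v _ => ?_
      rw [ih (h ++ [v]) i s, Finset.mul_sum]
      refine Finset.sum_congr rfl fun e _ => ?_
      rw [List.append_cons, contProb_cons, mul_assoc]
      simp

lemma condRemaining_eq_condLatency_nil (F : Fin n → Protocol) (i : Fin n) :
    condRemaining F ([] : Hist n) i = condLatency F [] i := by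
  have h2 := condLatency_add_pend F ([] : Hist n) i
  simp only [List.length_nil, zero_add, Finset.range_one, Finset.sum_singleton,
    List.take_nil, if_pos (pending_nil i)] at h2
  rw [add_comm (condLatency F [] i) 1] at h2
  exact ((ENNReal.add_right_inj (by simp)).1 h2).symm

lemma condRemaining_lt_top {F : Fin n → Protocol} (hF : ∀ i, ValidProtocol (F i)) {h : Hist n}
    (hh : 0 < histProb F h) {i : Fin n} (hfin : condLatency F [] i < ⊤) :
    condRemaining F h i < ⊤ := by
  have key : ∀ s, ENNReal.ofReal (histProb F h) * ENNReal.ofReal (condPendProb F h i s)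
      ≤ ENNReal.ofReal (condPendProb F [] i (h.length + s)) := by
    intro s
    rw [← ENNReal.ofReal_mul (le_of_lt hh)]
    apply ENNReal.ofReal_le_ofReal
    rw [condPendProb_add F h.length ([] : Hist n) i s]
    have hofn : List.ofFn (fun k : Fin h.length => h.get k) = h := List.ofFn_get h
    have hmem : (fun k : Fin h.length => h.get k) ∈ Finset.univ := Finset.mem_univ _
    have := Finset.single_le_sum (f := fun e : Fin h.length → Vec n =>
        contProb F ([] : Hist n) (List.ofFn e) * condPendProb F ([] ++ List.ofFn e) i s)
      (fun e _ => mul_nonneg (contProb_nonneg hF _ _) (condPendProb_nonneg hF _ _ _)) hmem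
    calc histProb F h * condPendProb F h i s
        = contProb F ([] : Hist n) (List.ofFn (fun k : Fin h.length => h.get k))
          * condPendProb F ([] ++ List.ofFn (fun k : Fin h.length => h.get k)) i s := by
          rw [hofn]; rfl
      _ ≤ _ := this
  have hle : ENNReal.ofReal (histProb F h) * condRemaining F h i ≤ condRemaining F ([] : Hist n) i := by
    unfold condRemaining
    rw [← ENNReal.tsum_mul_left]
    refine le_trans (ENNReal.tsum_le_tsum key) ?_
    exact Summable.tsum_le_tsum_of_inj (fun s => h.length + s)
      (add_right_injective h.length) (fun c _ => zero_le)
      (fun s => le_rfl) ENNReal.summable ENNReal.summable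
  rw [condRemaining_eq_condLatency_nil] at hle
  by_contra hc
  push_neg at hc
  have : condRemaining F h i = ⊤ := top_le_iff.1 hc
  rw [this, ENNReal.mul_top (by simp [ENNReal.ofReal_eq_zero]; linarith)] at hle
  exact absurd (top_le_iff.1 hle) (by intro hcl; rw [hcl] at hfin; exact lt_irrefl _ hfin)

-- ====================== part 3: vectors and small supports ======================

def zv (n : ℕ) : Vec n := fun _ => false
def ov (n : ℕ) : Vec n := fun _ => true
def ev {n : ℕ} (j : Fin n) : Vec n := fun j' => if j' = j then true else false
def vp {n : ℕ} (x y : Fin n) (a b : Bool) : Vec n :=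
  fun j => if j = x then a else if j = y then b else false

lemma not_alone_of_false {v : Vec n} {j : Fin n} (h : v j = false) : ¬ alone v j :=
  fun ha => by rw [ha.1] at h; exact absurd h (by simp)

lemma not_alone_of_other {v : Vec n} {j j' : Fin n} (hne : j' ≠ j) (h : v j' = true) :
    ¬ alone v j := fun ha => by rw [ha.2 j' hne] at h; exact absurd h (by simp)

lemma alone_ev (j : Fin n) : alone (ev j) j :=
  ⟨by simp [ev], fun j' hne => by simp [ev, hne]⟩

lemma not_alone_ev {j j' : Fin n} (hne : j ≠ j') : ¬ alone (ev j') j :=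
  not_alone_of_false (by simp [ev, hne])

lemma not_alone_zv (j : Fin n) : ¬ alone (zv n) j := not_alone_of_false rfl

lemma exists_other (hn : 2 ≤ n) (j : Fin n) : ∃ j' : Fin n, j' ≠ j := by
  by_cases h0 : j = ⟨0, by omega⟩
  · exact ⟨⟨1, by omega⟩, by subst h0; simp [Fin.ext_iff]⟩
  · exact ⟨⟨0, by omega⟩, fun c => h0 (c ▸ rfl)⟩

lemma not_alone_ov {j : Fin n} (hn : 2 ≤ n) : ¬ alone (ov n) j := by
  rcases exists_other hn j with ⟨j', hj'⟩
  exact not_alone_of_other hj' rfl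

-- vp basic values
lemma vp_fst {x y : Fin n} (a b : Bool) : vp x y a b x = a := by simp [vp]
lemma vp_snd {x y : Fin n} (hxy : x ≠ y) (a b : Bool) : vp x y a b y = b := by
  simp [vp, hxy.symm]
lemma vp_other {x y j : Fin n} (hx : j ≠ x) (hy : j ≠ y) (a b : Bool) : vp x y a b j = false := by
  simp [vp, hx, hy]

lemma vp_inj {x y : Fin n} (hxy : x ≠ y) {a b c d : Bool} (h : vp x y a b = vp x y c d) :
    a = c ∧ b = d := by
  constructor
  · have := congrFun h x; rwa [vp_fst, vp_fst] at this
  · have := congrFun h y; rwa [vp_snd hxy, vp_snd hxy] at this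

lemma not_alone_vp_ff {x y j : Fin n} : ¬ alone (vp x y false false) j := by
  apply not_alone_of_false
  by_cases hx : j = x
  · subst hx; exact vp_fst _ _
  · by_cases hy : j = y
    · subst hy; simp [vp]
    · exact vp_other hx hy _ _

lemma not_alone_vp_ft {x y j : Fin n} (hxy : x ≠ y) (hj : j ≠ y) :
    ¬ alone (vp x y false true) j := by
  exact not_alone_of_other (j' := y) hj.symm (vp_snd hxy _ _)

lemma alone_vp_ft {x y : Fin n} (hxy : x ≠ y) : alone (vp x y false true) y := by
  refine ⟨vp_snd hxy _ _, fun j hj => ?_⟩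
  by_cases hx : j = x
  · subst hx; exact vp_fst _ _
  · exact vp_other hx hj _ _

lemma alone_vp_tf {x y : Fin n} (hxy : x ≠ y) : alone (vp x y true false) x := by
  refine ⟨vp_fst _ _, fun j hj => ?_⟩
  by_cases hy : j = y
  · subst hy; exact vp_snd hxy _ _
  · exact vp_other hj hy _ _

lemma not_alone_vp_tt {x y j : Fin n} (hxy : x ≠ y) : ¬ alone (vp x y true true) j := by
  by_cases hx : j = x
  · subst hx; exact not_alone_of_other (Ne.symm hxy) (vp_snd hxy _ _)
  · exact not_alone_of_other (fun c => hx c.symm) (vp_fst _ _)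

-- stepProb vanishing / evaluation
lemma stepProb_zero_of_nonpending {F : Fin n → Protocol} {h : Hist n} {v : Vec n}
    (j : Fin n) (hnp : ¬ pending h j) (hv : v j = true) : stepProb F h v = 0 :=
  Finset.prod_eq_zero (Finset.mem_univ j) (by rw [if_neg hnp, if_pos hv])

lemma stepProb_zero_of_pending_zero {F : Fin n → Protocol} {h : Hist n} {v : Vec n}
    (j : Fin n) (hpj : pending h j) (hv : v j = true) (hF0 : F j (personal h j) = 0) :
    stepProb F h v = 0 :=
  Finset.prod_eq_zero (Finset.mem_univ j) (by rw [if_pos hpj, if_pos hv, hF0])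

lemma stepProb_zero_of_pending_one {F : Fin n → Protocol} {h : Hist n} {v : Vec n}
    (j : Fin n) (hpj : pending h j) (hv : v j = false) (hF1 : F j (personal h j) = 1) :
    stepProb F h v = 0 :=
  Finset.prod_eq_zero (Finset.mem_univ j)
    (by rw [if_pos hpj, if_neg (by simp [hv]), hF1]; ring)

lemma stepProb_eval_pair {F : Fin n → Protocol} {h : Hist n} {x y : Fin n} (hxy : x ≠ y)
    (hpend : ∀ j, pending h j ↔ (j = x ∨ j = y)) (v : Vec n)
    (hv : ∀ j, j ≠ x → j ≠ y → v j = false) :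
    stepProb F h v
      = (if v x = true then F x (personal h x) else 1 - F x (personal h x))
        * (if v y = true then F y (personal h y) else 1 - F y (personal h y)) := by
  unfold stepProb
  rw [← Finset.prod_subset (Finset.subset_univ ({x, y} : Finset (Fin n)))
    (fun j _ hj => ?_), Finset.prod_pair hxy, if_pos ((hpend x).2 (Or.inl rfl)),
    if_pos ((hpend y).2 (Or.inr rfl))]
  have hjx : j ≠ x := fun c => hj (by simp [c])
  have hjy : j ≠ y := fun c => hj (by simp [c])
  rw [if_neg (fun c => by rcases (hpend j).1 c with h1 | h1 <;> simp_all),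
    if_neg (by simp [hv j hjx hjy])]

lemma stepProb_eval_single {F : Fin n → Protocol} {h : Hist n} {x : Fin n}
    (hpend : ∀ j, pending h j ↔ j = x) (v : Vec n)
    (hv : ∀ j, j ≠ x → v j = false) :
    stepProb F h v
      = (if v x = true then F x (personal h x) else 1 - F x (personal h x)) := by
  unfold stepProb
  rw [← Finset.prod_subset (Finset.subset_univ ({x} : Finset (Fin n)))
    (fun j _ hj => ?_), Finset.prod_singleton, if_pos ((hpend x).2 rfl)]
  have hjx : j ≠ x := by simpa using hj
  rw [if_neg (fun c => hjx ((hpend j).1 c)), if_neg (by simp [hv j hjx])]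

-- sum collapse lemmas
lemma sum_vec_pair {M : Type*} [AddCommMonoid M] {x y : Fin n} (hxy : x ≠ y)
    (T : Vec n → M) (hT : ∀ v : Vec n, (∃ j, j ≠ x ∧ j ≠ y ∧ v j = true) → T v = 0) :
    ∑ v : Vec n, T v
      = T (vp x y false false) + T (vp x y false true)
        + T (vp x y true false) + T (vp x y true true) := by
  classical
  have hsub : ({vp x y false false, vp x y false true, vp x y true false, vp x y true true}
      : Finset (Vec n)) ⊆ Finset.univ := Finset.subset_univ _
  rw [← Finset.sum_subset hsub (fun v _ hv => ?hoff)]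
  case hoff =>
    apply hT
    by_contra hc
    push_neg at hc
    have hvvp : v = vp x y (v x) (v y) := by
      funext j
      by_cases hx : j = x
      · subst hx; rw [vp_fst]
      · by_cases hy : j = y
        · subst hy; rw [vp_snd hxy]
        · rw [vp_other hx hy]
          cases hvj : v j with
          | false => rfl
          | true => exact absurd hvj (by simp [hc j hx hy])
    apply hv
    rw [hvvp]
    cases hvx : v x <;> cases hvy : v y
    · exact Finset.mem_insert_self _ _
    · exact Finset.mem_insert_of_mem (Finset.mem_insert_self _ _)
    · exact Finset.mem_insert_of_mem (Finset.mem_insert_of_mem (Finset.mem_insert_self _ _))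
    · exact Finset.mem_insert_of_mem (Finset.mem_insert_of_mem
        (Finset.mem_insert_of_mem (Finset.mem_singleton_self _)))
  have h1 : vp x y false false ∉ ({vp x y false true, vp x y true false, vp x y true true}
      : Finset (Vec n)) := by
    simp only [Finset.mem_insert, Finset.mem_singleton]
    push_neg
    refine ⟨fun c => ?_, fun c => ?_, fun c => ?_⟩ <;> rcases vp_inj hxy c with ⟨h1, h2⟩ <;>
      first | exact absurd h1 (by decide) | exact absurd h2 (by decide)
  have h2 : vp x y false true ∉ ({vp x y true false, vp x y true true} : Finset (Vec n)) := by
    simp only [Finset.mem_insert, Finset.mem_singleton]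
    push_neg
    refine ⟨fun c => ?_, fun c => ?_⟩ <;> rcases vp_inj hxy c with ⟨h1, h2⟩ <;>
      first | exact absurd h1 (by decide) | exact absurd h2 (by decide)
  have h3 : vp x y true false ∉ ({vp x y true true} : Finset (Vec n)) := by
    simp only [Finset.mem_singleton]
    intro c; rcases vp_inj hxy c with ⟨h1, h2⟩; exact absurd h2 (by decide)
  rw [Finset.sum_insert h1, Finset.sum_insert h2, Finset.sum_insert h3, Finset.sum_singleton]
  abel

lemma sum_vec_single {M : Type*} [AddCommMonoid M] {x : Fin n}
    (T : Vec n → M) (hT : ∀ v : Vec n, (∃ j, j ≠ x ∧ v j = true) → T v = 0) :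
    ∑ v : Vec n, T v = T (zv n) + T (ev x) := by
  classical
  have hne : zv n ≠ ev x := by
    intro c
    have := congrFun c x
    simp [zv, ev] at this
  have hsub : ({zv n, ev x} : Finset (Vec n)) ⊆ Finset.univ := Finset.subset_univ _
  rw [← Finset.sum_subset hsub (fun v _ hv => ?hoff), Finset.sum_pair hne]
  case hoff =>
    apply hT
    by_contra hc
    push_neg at hc
    apply hv
    simp only [Finset.mem_insert, Finset.mem_singleton]
    cases hvx : v x with
    | false =>
        left
        funext j
        by_cases hx : j = x
        · subst hx; exact hvx
        · cases hvj : v j with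
          | false => rfl
          | true => exact absurd hvj (by simp [hc j hx])
    | true =>
        right
        funext j
        by_cases hx : j = x
        · subst hx; simp [ev, hvx]
        · cases hvj : v j with
          | false => simp [ev, hx, hvj]
          | true => exact absurd hvj (by simp [hc j hx])

lemma valid_age {p : ℕ → ℝ} (hp : ∀ t, 1 ≤ t → 0 ≤ p t ∧ p t ≤ 1) :
    ∀ i : Fin n, ValidProtocol ((fun _ : Fin n => ageProtocol p) i) :=
  fun _ l => hp (l.length + 1) (by omega)

lemma valid_update {F : Fin n → Protocol} (hF : ∀ j, ValidProtocol (F j)) {i : Fin n}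
    {g : Protocol} (hg : ValidProtocol g) :
    ∀ j, ValidProtocol (Function.update F i g j) := by
  intro j
  rcases eq_or_ne j i with rfl | hne
  · rwa [Function.update_self]
  · rw [Function.update_of_ne hne]; exact hF j

lemma personal_length (h : Hist n) (i : Fin n) : (personal h i).length = h.length := by
  simp [personal]

-- ====================== part 4: state value lemmas ======================

lemma lone_rec {G : Fin n → Protocol} (hG : ∀ i, ValidProtocol (G i)) {h : Hist n} {x : Fin n}
    (hpend : ∀ j, pending h j ↔ j = x) :
    condRemaining G h x = 1
      + ENNReal.ofReal (1 - G x (personal h x)) * condRemaining G (h ++ [zv n]) x := by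
  rw [condRemaining_rec hG h x, if_pos ((hpend x).2 rfl)]
  congr 1
  rw [sum_vec_single (fun v => ENNReal.ofReal (stepProb G h v) * condRemaining G (h ++ [v]) x)
    (fun v hv => ?_)]
  · have hzv : stepProb G h (zv n) = 1 - G x (personal h x) := by
      rw [stepProb_eval_single hpend (zv n) (fun j _ => rfl)]
      rfl
    have hzero : condRemaining G (h ++ [ev x]) x = 0 := by
      apply condRemaining_nonpending
      rw [pending_concat]
      exact fun c => c.2 (alone_ev x)
    rw [hzv, hzero, mul_zero, add_zero]
  · rcases hv with ⟨j, hjx, hjv⟩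
    show ENNReal.ofReal (stepProb G h v) * condRemaining G (h ++ [v]) x = 0
    rw [stepProb_zero_of_nonpending j (fun c => hjx ((hpend j).1 c)) hjv]
    simp

lemma pair_rec {G : Fin n → Protocol} (hG : ∀ i, ValidProtocol (G i)) {h : Hist n}
    {x y : Fin n} (hxy : x ≠ y) (hpend : ∀ j, pending h j ↔ (j = x ∨ j = y)) :
    condRemaining G h x = 1
      + ENNReal.ofReal ((1 - G x (personal h x)) * (1 - G y (personal h y)))
          * condRemaining G (h ++ [vp x y false false]) x
      + ENNReal.ofReal ((1 - G x (personal h x)) * G y (personal h y))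
          * condRemaining G (h ++ [vp x y false true]) x
      + ENNReal.ofReal (G x (personal h x) * G y (personal h y))
          * condRemaining G (h ++ [vp x y true true]) x := by
  rw [condRemaining_rec hG h x, if_pos ((hpend x).2 (Or.inl rfl))]
  rw [sum_vec_pair hxy (fun v => ENNReal.ofReal (stepProb G h v) * condRemaining G (h ++ [v]) x)
    (fun v hv => ?_)]
  · have h00 : stepProb G h (vp x y false false)
        = (1 - G x (personal h x)) * (1 - G y (personal h y)) := by
      rw [stepProb_eval_pair hxy hpend _ (fun j hjx hjy => vp_other hjx hjy _ _)]
      rw [vp_fst, vp_snd hxy]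
      norm_num
    have h01 : stepProb G h (vp x y false true)
        = (1 - G x (personal h x)) * G y (personal h y) := by
      rw [stepProb_eval_pair hxy hpend (vp x y false true) (fun j hjx hjy => vp_other hjx hjy _ _)]
      rw [vp_fst, vp_snd hxy]
      norm_num
    have h11 : stepProb G h (vp x y true true)
        = G x (personal h x) * G y (personal h y) := by
      rw [stepProb_eval_pair hxy hpend (vp x y true true) (fun j hjx hjy => vp_other hjx hjy _ _)]
      rw [vp_fst, vp_snd hxy]
      norm_num
    have h10 : condRemaining G (h ++ [vp x y true false]) x = 0 := by
      apply condRemaining_nonpending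
      rw [pending_concat]
      exact fun c => c.2 (alone_vp_tf hxy)
    rw [h00, h01, h11, h10, mul_zero, add_zero]
    ring
  · rcases hv with ⟨j, hjx, hjy, hjv⟩
    show ENNReal.ofReal (stepProb G h v) * condRemaining G (h ++ [v]) x = 0
    rw [stepProb_zero_of_nonpending j
      (fun c => by rcases (hpend j).1 c with h1 | h1 <;> [exact hjx h1; exact hjy h1]) hjv]
    simp

lemma transfer_age {p : ℕ → ℝ} {h h' : Hist n} (hl : h.length = h'.length)
    (hpend : ∀ j, pending h j ↔ pending h' j) (i : Fin n) :
    condRemaining (fun _ : Fin n => ageProtocol p) h i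
      = condRemaining (fun _ : Fin n => ageProtocol p) h' i := by
  unfold condRemaining
  refine tsum_congr fun s => ?_
  rw [condPendProb_transfer (F := fun _ : Fin n => ageProtocol p)
    (F' := fun _ : Fin n => ageProtocol p) s h h' hl hpend
    (fun j l l' _ hll => by simp [ageProtocol, hll]) i]

lemma transfer_update_age {p : ℕ → ℝ} {g : Protocol} {x : Fin n} {h : Hist n}
    (hg : ∀ l : List Bool, h.length ≤ l.length → g l = p (l.length + 1)) (i : Fin n) :
    condRemaining (Function.update (fun _ : Fin n => ageProtocol p) x g) h i
      = condRemaining (fun _ : Fin n => ageProtocol p) h i := by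
  unfold condRemaining
  refine tsum_congr fun s => ?_
  rw [condPendProb_transfer (F := Function.update (fun _ : Fin n => ageProtocol p) x g)
    (F' := fun _ : Fin n => ageProtocol p) s h h rfl (fun j => Iff.rfl)
    (fun j l l' hl hll => ?_) i]
  rcases eq_or_ne j x with rfl | hne
  · rw [Function.update_self, hg l hl]; simp [ageProtocol, hll]
  · rw [Function.update_of_ne hne]; simp [ageProtocol, hll]

-- ====================== part 5: reachability ======================

lemma univ_reach {p : ℕ → ℝ} (hn : 2 ≤ n) :
    ∀ t, ∃ h : Hist n, h.length = t ∧ 0 < histProb (fun _ : Fin n => ageProtocol p) h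
      ∧ ∀ j, pending h j := by
  intro t
  induction t with
  | zero => exact ⟨[], rfl, by rw [histProb_nil]; norm_num, pending_nil⟩
  | succ t ih =>
      rcases ih with ⟨h, hl, hpos, hpend⟩
      by_cases hq : 0 < p (t + 1)
      · refine ⟨h ++ [ov n], by simp [hl], ?_, fun j => ?_⟩
        · rw [histProb_concat]
          refine mul_pos hpos (Finset.prod_pos fun j _ => ?_)
          have hov : ov n j = true := rfl
          rw [if_pos (hpend j), if_pos hov]
          show 0 < p ((personal h j).length + 1)
          rw [personal_length, hl]
          exact hq
        · rw [pending_concat]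
          exact ⟨hpend j, not_alone_ov hn⟩
      · refine ⟨h ++ [zv n], by simp [hl], ?_, fun j => ?_⟩
        · rw [histProb_concat]
          refine mul_pos hpos (Finset.prod_pos fun j _ => ?_)
          rw [if_pos (hpend j), if_neg (by simp [zv])]
          have hle0 : p (t+1) ≤ 0 := le_of_not_gt hq
          show 0 < 1 - p ((personal h j).length + 1)
          rw [personal_length, hl]
          linarith
        · rw [pending_concat]
          exact ⟨hpend j, not_alone_zv j⟩

lemma pos_p {p : ℕ → ℝ} (hn : 2 ≤ n) (hp : ∀ t, 1 ≤ t → 0 ≤ p t ∧ p t ≤ 1)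
    (heq : IsEquilibrium (fun _ : Fin n => ageProtocol p)) :
    ∀ t, 0 < p (t + 1) := by
  intro t
  by_contra hq
  have hq0 : p (t + 1) = 0 := le_antisymm (not_lt.1 hq) (hp _ (by omega)).1
  rcases univ_reach (p := p) hn t with ⟨h, hl, hpos, hpend⟩
  set x : Fin n := ⟨0, by omega⟩ with hxdef
  set FA := (fun _ : Fin n => ageProtocol p) with hFA
  have hagev : ∀ j : Fin n, FA j (personal h j) = 0 := by
    intro j
    simp only [hFA, ageProtocol, personal_length, hl, hq0]
  -- value under FA
  have hrec := condRemaining_rec (F := FA) (valid_age hp) h x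
  have hsum : ∑ v : Vec n, ENNReal.ofReal (stepProb FA h v) * condRemaining FA (h ++ [v]) x
      = ENNReal.ofReal (stepProb FA h (zv n)) * condRemaining FA (h ++ [zv n]) x := by
    refine Finset.sum_eq_single (zv n) (fun v _ hv => ?_) (by intro c; exact absurd (Finset.mem_univ _) c)
    have : ∃ j, v j = true := by
      by_contra hc
      push_neg at hc
      exact hv (funext fun j => by simpa [zv] using hc j)
    rcases this with ⟨j, hj⟩
    rw [stepProb_zero_of_pending_zero j (hpend j) hj (hagev j)]
    simp
  have hstep1 : stepProb FA h (zv n) = 1 := by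
    refine Finset.prod_eq_one fun j _ => ?_
    rw [if_pos (hpend j), if_neg (by simp [zv]), hagev j]
    norm_num
  have hge : 1 ≤ condRemaining FA (h ++ [zv n]) x := by
    apply one_le_condRemaining
    rw [pending_concat]
    exact ⟨hpend x, not_alone_zv x⟩
  -- the deviation: transmit now
  set g : Protocol := fun l => if l.length = t then 1 else p (l.length + 1) with hg
  have hgval : ValidProtocol g := by
    intro l
    show 0 ≤ (if l.length = t then (1:ℝ) else p (l.length + 1))
      ∧ (if l.length = t then (1:ℝ) else p (l.length + 1)) ≤ 1
    split_ifs
    · norm_num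
    · exact hp _ (by omega)
  set F' := Function.update FA x g with hF'
  have hrec' := condRemaining_rec (F := F') (valid_update (valid_age hp) hgval) h x
  have hsum' : ∑ v : Vec n, ENNReal.ofReal (stepProb F' h v) * condRemaining F' (h ++ [v]) x
      = 0 := by
    refine Finset.sum_eq_zero fun v _ => ?_
    by_cases hother : ∃ j, j ≠ x ∧ v j = true
    · rcases hother with ⟨j, hjx, hjv⟩
      rw [stepProb_zero_of_pending_zero j (hpend j) hjv
        (by rw [hF', Function.update_of_ne hjx]; exact hagev j)]
      simp
    · push_neg at hother
      by_cases hvx : v x = true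
      · have halone : alone v x := ⟨hvx, fun j hj => by simpa using hother j hj⟩
        rw [condRemaining_nonpending F' (fun c => ((pending_concat).1 c).2 halone)]
        simp
      · have hgx : F' x (personal h x) = 1 := by
          rw [hF', Function.update_self]
          show (if (personal h x).length = t then (1:ℝ) else p ((personal h x).length + 1)) = 1
          rw [if_pos (by rw [personal_length, hl])]
        rw [stepProb_zero_of_pending_one x (hpend x) (by simpa using hvx) hgx]
        simp
  have hval' : condRemaining F' h x = 1 := by
    rw [hrec', if_pos (hpend x), hsum', add_zero]
  have hle := equilibrium_remaining heq hpos hgval x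
  rw [← hF', hval', hrec, if_pos (hpend x), hsum, hstep1] at hle
  rw [ENNReal.ofReal_one, one_mul] at hle
  have h10 : condRemaining FA (h ++ [zv n]) x ≤ 0 := by
    have hle' : 1 + condRemaining FA (h ++ [zv n]) x ≤ 1 + 0 := by simpa using hle
    exact (ENNReal.add_le_add_iff_left (a := (1:ℝ≥0∞)) (by simp)).1 hle'
  exact absurd (le_antisymm h10 zero_le) (by intro c; rw [c] at hge; simp at hge)

lemma lt_one_p {p : ℕ → ℝ} (hn : 2 ≤ n) (hp : ∀ t, 1 ≤ t → 0 ≤ p t ∧ p t ≤ 1)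
    (hfin : condLatency (fun _ : Fin n => ageProtocol p) [] (⟨0, by omega⟩ : Fin n) < ⊤) :
    ∀ t, ∃ u, t < u ∧ p u < 1 := by
  intro t
  by_contra hc
  push_neg at hc
  have hone : ∀ u, t < u → p u = 1 := fun u hu => le_antisymm (hp u (by omega)).2 (hc u hu)
  rcases univ_reach (p := p) hn t with ⟨h, hl, hpos, hpend⟩
  set x : Fin n := ⟨0, by omega⟩ with hxdef
  set FA := (fun _ : Fin n => ageProtocol p) with hFA
  have hcpp : ∀ s (h' : Hist n), t ≤ h'.length → (∀ j, pending h' j) →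
      condPendProb FA h' x s = 1 := by
    intro s
    induction s with
    | zero => intro h' _ hpend'; rw [condPendProb_zero, if_pos (hpend' x)]
    | succ s ih =>
        intro h' hth hpend'
        rw [condPendProb_succ]
        have hage1 : ∀ j : Fin n, FA j (personal h' j) = 1 := by
          intro j
          rw [hFA]
          show ageProtocol p (personal h' j) = 1
          rw [ageProtocol, personal_length]
          exact hone _ (by omega)
        have hsum : ∑ v : Vec n, stepProb FA h' v * condPendProb FA (h' ++ [v]) x s
            = stepProb FA h' (ov n) * condPendProb FA (h' ++ [ov n]) x s := by
          refine Finset.sum_eq_single (ov n) (fun v _ hv => ?_)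
            (by intro c; exact absurd (Finset.mem_univ _) c)
          have : ∃ j, v j = false := by
            by_contra hcc
            push_neg at hcc
            exact hv (funext fun j => by
              have := hcc j
              cases hvj : v j
              · exact absurd hvj this
              · rfl)
          rcases this with ⟨j, hj⟩
          rw [stepProb_zero_of_pending_one j (hpend' j) hj (hage1 j), zero_mul]
        have hstep1 : stepProb FA h' (ov n) = 1 := by
          refine Finset.prod_eq_one fun j _ => ?_
          have hov : ov n j = true := rfl
          rw [if_pos (hpend' j), if_pos hov, hage1 j]
        rw [hsum, hstep1, one_mul]
        exact ih (h' ++ [ov n]) (by simp; omega) (fun j => by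
          rw [pending_concat]; exact ⟨hpend' j, not_alone_ov hn⟩)
  have htop : condRemaining FA h x = ⊤ := by
    unfold condRemaining
    have : ∀ s, ENNReal.ofReal (condPendProb FA h x s) = 1 := by
      intro s
      rw [hcpp s h (le_of_eq hl.symm) hpend]
      simp
    rw [tsum_congr this]
    exact ENNReal.tsum_const_eq_top_of_ne_zero one_ne_zero
  have := condRemaining_lt_top (valid_age hp) hpos (i := x) hfin
  rw [htop] at this
  exact absurd this (by simp)

-- ====================== part 5b: keep / drop / to_pair ======================

lemma keep_many {p : ℕ → ℝ} (hposp : ∀ t, 0 < p (t+1)) {x y : Fin n} (hxy : x ≠ y) :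
    ∀ (d : ℕ) {h : Hist n}, 0 < histProb (fun _ : Fin n => ageProtocol p) h →
      pending h x → pending h y →
      ∃ h' : Hist n, h'.length = h.length + d
        ∧ 0 < histProb (fun _ : Fin n => ageProtocol p) h'
        ∧ (∀ j, pending h' j ↔ pending h j) := by
  intro d
  induction d with
  | zero => intro h hpos hx hy; exact ⟨h, rfl, hpos, fun j => Iff.rfl⟩
  | succ d ih =>
      intro h hpos hx hy
      rcases ih hpos hx hy with ⟨h', hl, hpos', hiff⟩
      set v : Vec n := fun j => if pending h' j then true else false with hv
      have hvx : v x = true := by rw [hv]; simp [if_pos ((hiff x).2 hx)]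
      have hvy : v y = true := by rw [hv]; simp [if_pos ((hiff y).2 hy)]
      have hnal : ∀ j, ¬ alone v j := by
        intro j hal
        rcases eq_or_ne j x with rfl | hjx
        · rw [hal.2 y (fun c => hxy c.symm)] at hvy
          exact absurd hvy (by simp)
        · rw [hal.2 x (fun c => hjx c.symm)] at hvx
          exact absurd hvx (by simp)
      refine ⟨h' ++ [v], by simp [hl]; omega, ?_, fun j => ?_⟩
      · rw [histProb_concat]
        refine mul_pos hpos' (Finset.prod_pos fun j _ => ?_)
        by_cases hpj : pending h' j
        · have hvj : v j = true := by rw [hv]; simp [if_pos hpj]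
          rw [if_pos hpj, if_pos hvj]
          show 0 < p ((personal h' j).length + 1)
          rw [personal_length]
          exact hposp _
        · have hvj : v j = false := by rw [hv]; simp [if_neg hpj]
          rw [if_neg hpj, if_neg (by simp [hvj])]
          norm_num
      · rw [pending_concat]
        constructor
        · exact fun c => (hiff j).1 c.1
        · exact fun c => ⟨(hiff j).2 c, hnal j⟩

lemma drop_one {p : ℕ → ℝ} {h : Hist n} {jstar : Fin n}
    (hq0 : 0 < p (h.length + 1)) (hq1 : p (h.length + 1) < 1)
    (hpos : 0 < histProb (fun _ : Fin n => ageProtocol p) h) (hj : pending h jstar) :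
    0 < histProb (fun _ : Fin n => ageProtocol p) (h ++ [ev jstar])
      ∧ ∀ j, pending (h ++ [ev jstar]) j ↔ (pending h j ∧ j ≠ jstar) := by
  constructor
  · rw [histProb_concat]
    refine mul_pos hpos (Finset.prod_pos fun j _ => ?_)
    by_cases hpj : pending h j
    · rcases eq_or_ne j jstar with rfl | hne
      · have hev : ev j j = true := by simp [ev]
        rw [if_pos hpj, if_pos hev]
        show 0 < p ((personal h j).length + 1)
        rw [personal_length]
        exact hq0
      · have hev : ev jstar j = false := by simp [ev, hne]
        rw [if_pos hpj, if_neg (by simp [hev])]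
        show 0 < 1 - p ((personal h j).length + 1)
        rw [personal_length]
        linarith
    · have hne : j ≠ jstar := fun c => hpj (c ▸ hj)
      have hev : ev jstar j = false := by simp [ev, hne]
      rw [if_neg hpj, if_neg (by simp [hev])]
      norm_num
  · intro j
    rw [pending_concat]
    constructor
    · rintro ⟨h1, h2⟩
      refine ⟨h1, fun c => h2 (c ▸ alone_ev jstar)⟩
    · rintro ⟨h1, h2⟩
      exact ⟨h1, not_alone_ev h2⟩

lemma to_pair {p : ℕ → ℝ} (hn : 2 ≤ n) (hp : ∀ t, 1 ≤ t → 0 ≤ p t ∧ p t ≤ 1)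
    (heq : IsEquilibrium (fun _ : Fin n => ageProtocol p))
    (hfin : condLatency (fun _ : Fin n => ageProtocol p) [] (⟨0, by omega⟩ : Fin n) < ⊤)
    {x y : Fin n} (hxy : x ≠ y) :
    ∀ (k : ℕ) (h : Hist n), 0 < histProb (fun _ : Fin n => ageProtocol p) h →
      pending h x → pending h y →
      (Finset.filter (fun j => pending h j) Finset.univ).card ≤ k + 2 →
      ∃ h' : Hist n, 0 < histProb (fun _ : Fin n => ageProtocol p) h'
        ∧ (∀ j, pending h' j ↔ (j = x ∨ j = y)) := by
  intro k
  induction k with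
  | zero =>
      intro h hpos hx hy hcard
      have hsub : ({x, y} : Finset (Fin n)) ⊆ Finset.filter (fun j => pending h j) Finset.univ := by
        intro j hj
        rcases Finset.mem_insert.1 hj with rfl | hj
        · exact Finset.mem_filter.2 ⟨Finset.mem_univ _, hx⟩
        · rw [Finset.mem_singleton] at hj
          subst hj
          exact Finset.mem_filter.2 ⟨Finset.mem_univ _, hy⟩
      have heqset := Finset.eq_of_subset_of_card_le hsub
        (by rwa [Finset.card_pair hxy])
      refine ⟨h, hpos, fun j => ?_⟩
      constructor
      · intro hpj
        have : j ∈ ({x, y} : Finset (Fin n)) := by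
          rw [heqset]
          exact Finset.mem_filter.2 ⟨Finset.mem_univ _, hpj⟩
        simpa using this
      · rintro (rfl | rfl) <;> assumption
  | succ k ih =>
      intro h hpos hx hy hcard
      by_cases hex : ∃ j, pending h j ∧ j ≠ x ∧ j ≠ y
      · rcases hex with ⟨js, hjs, hjsx, hjsy⟩
        rcases lt_one_p hn hp hfin h.length with ⟨u, hu, hu1⟩
        rcases keep_many (pos_p hn hp heq) hxy (u - 1 - h.length) hpos hx hy
          with ⟨h', hl', hpos', hiff'⟩
        have hlen' : h'.length = u - 1 := by omega
        have hq0 : 0 < p (h'.length + 1) := pos_p hn hp heq _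
        have hq1 : p (h'.length + 1) < 1 := by
          have : h'.length + 1 = u := by omega
          rwa [this]
        rcases drop_one hq0 hq1 hpos' ((hiff' js).2 hjs) with ⟨hpos'', hiff''⟩
        refine ih (h' ++ [ev js]) hpos''
          ((hiff'' x).2 ⟨(hiff' x).2 hx, fun c => hjsx c.symm⟩)
          ((hiff'' y).2 ⟨(hiff' y).2 hy, fun c => hjsy c.symm⟩) ?_
        have hset : Finset.filter (fun j => pending (h' ++ [ev js]) j) Finset.univ
            = (Finset.filter (fun j => pending h j) Finset.univ).erase js := by
          ext j
          rw [Finset.mem_filter, Finset.mem_erase, Finset.mem_filter]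
          constructor
          · rintro ⟨h1, h2⟩
            rcases (hiff'' j).1 h2 with ⟨h3, h4⟩
            exact ⟨h4, h1, (hiff' j).1 h3⟩
          · rintro ⟨h1, h2, h3⟩
            exact ⟨h2, (hiff'' j).2 ⟨(hiff' j).2 h3, h1⟩⟩
        have hmem : js ∈ Finset.filter (fun j => pending h j) Finset.univ :=
          Finset.mem_filter.2 ⟨Finset.mem_univ _, hjs⟩
        rw [hset, Finset.card_erase_of_mem hmem]
        omega
      · push_neg at hex
        refine ⟨h, hpos, fun j => ?_⟩
        constructor
        · intro hpj
          by_cases hjx : j = x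
          · exact Or.inl hjx
          · by_cases hjy : j = y
            · exact Or.inr hjy
            · exact Or.inr (hex j hpj hjx)
        · rintro (rfl | rfl) <;> assumption

lemma pair_reach {p : ℕ → ℝ} (hn : 2 ≤ n) (hp : ∀ t, 1 ≤ t → 0 ≤ p t ∧ p t ≤ 1)
    (heq : IsEquilibrium (fun _ : Fin n => ageProtocol p))
    (hfin : condLatency (fun _ : Fin n => ageProtocol p) [] (⟨0, by omega⟩ : Fin n) < ⊤)
    {x y : Fin n} (hxy : x ≠ y) :
    ∃ T : ℕ, ∀ t, T ≤ t → ∃ h : Hist n, h.length = t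
      ∧ 0 < histProb (fun _ : Fin n => ageProtocol p) h
      ∧ (∀ j, pending h j ↔ (j = x ∨ j = y)) := by
  obtain ⟨h0, hpos0, hiff0⟩ := to_pair hn hp heq hfin hxy n []
    (by rw [histProb_nil]; norm_num) (pending_nil x) (pending_nil y)
    (le_trans (Finset.card_le_univ _) (by rw [Fintype.card_fin]; omega))
  refine ⟨h0.length, fun t ht => ?_⟩
  rcases keep_many (pos_p hn hp heq) hxy (t - h0.length) hpos0
    ((hiff0 x).2 (Or.inl rfl)) ((hiff0 y).2 (Or.inr rfl)) with ⟨h', hl', hpos', hiff'⟩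
  exact ⟨h', by omega, hpos', fun j => (hiff' j).trans (hiff0 j)⟩

lemma lone_value {p : ℕ → ℝ} (hp : ∀ t, 1 ≤ t → 0 ≤ p t ∧ p t ≤ 1)
    (heq : IsEquilibrium (fun _ : Fin n => ageProtocol p)) {h : Hist n} {x : Fin n}
    (hpos : 0 < histProb (fun _ : Fin n => ageProtocol p) h)
    (hpend : ∀ j, pending h j ↔ j = x) :
    condRemaining (fun _ : Fin n => ageProtocol p) h x = 1 ∧ p (h.length + 1) = 1 := by
  set FA := (fun _ : Fin n => ageProtocol p) with hFA
  set g : Protocol := fun l => if l.length = h.length then 1 else p (l.length + 1) with hg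
  have hgval : ValidProtocol g := by
    intro l
    show 0 ≤ (if l.length = h.length then (1:ℝ) else p (l.length + 1))
      ∧ (if l.length = h.length then (1:ℝ) else p (l.length + 1)) ≤ 1
    split_ifs
    · norm_num
    · exact hp _ (by omega)
  set F' := Function.update FA x g with hF'
  have hFx' : F' x (personal h x) = 1 := by
    rw [hF', Function.update_self]
    show (if (personal h x).length = h.length then (1:ℝ) else p ((personal h x).length + 1)) = 1
    rw [if_pos (personal_length h x)]
  have hrec' := lone_rec (G := F') (valid_update (valid_age hp) hgval) hpend
  rw [hFx'] at hrec'
  have hval' : condRemaining F' h x = 1 := by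
    rw [hrec']
    norm_num
  have hrec := lone_rec (G := FA) (valid_age hp) hpend
  have hFx : FA x (personal h x) = p (h.length + 1) := by
    show p ((personal h x).length + 1) = p (h.length + 1)
    rw [personal_length]
  rw [hFx] at hrec
  have hY : 1 ≤ condRemaining FA (h ++ [zv n]) x :=
    one_le_condRemaining _ (pending_concat.2 ⟨(hpend x).2 rfl, not_alone_zv x⟩)
  have hle := equilibrium_remaining heq hpos hgval x
  rw [← hF', hval', hrec] at hle
  have hzero : ENNReal.ofReal (1 - p (h.length + 1)) * condRemaining FA (h ++ [zv n]) x = 0 := by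
    have hle' : 1 + ENNReal.ofReal (1 - p (h.length + 1)) * condRemaining FA (h ++ [zv n]) x
        ≤ 1 + 0 := by simpa using hle
    have := (ENNReal.add_le_add_iff_left (a := (1:ℝ≥0∞)) (by simp)).1 hle'
    exact le_antisymm this zero_le
  rcases mul_eq_zero.1 hzero with hz | hz
  · have hple : 1 - p (h.length + 1) ≤ 0 := ENNReal.ofReal_eq_zero.1 hz
    have : p (h.length + 1) = 1 := le_antisymm (hp _ (by omega)).2 (by linarith)
    refine ⟨?_, this⟩
    rw [hrec, this]
    norm_num
  · rw [hz] at hY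
    exact absurd hY (by simp)

-- ====================== part 6: pair-state helpers ======================

lemma pend_ext_ff {h : Hist n} {x y : Fin n}
    (hpend : ∀ j, pending h j ↔ (j = x ∨ j = y)) :
    ∀ j, pending (h ++ [vp x y false false]) j ↔ (j = x ∨ j = y) := by
  intro j
  rw [pending_concat]
  exact ⟨fun c => (hpend j).1 c.1, fun c => ⟨(hpend j).2 c, not_alone_vp_ff⟩⟩

lemma pend_ext_tt {h : Hist n} {x y : Fin n} (hxy : x ≠ y)
    (hpend : ∀ j, pending h j ↔ (j = x ∨ j = y)) :
    ∀ j, pending (h ++ [vp x y true true]) j ↔ (j = x ∨ j = y) := by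
  intro j
  rw [pending_concat]
  exact ⟨fun c => (hpend j).1 c.1, fun c => ⟨(hpend j).2 c, not_alone_vp_tt hxy⟩⟩

lemma pend_ext_ft {h : Hist n} {x y : Fin n} (hxy : x ≠ y)
    (hpend : ∀ j, pending h j ↔ (j = x ∨ j = y)) :
    ∀ j, pending (h ++ [vp x y false true]) j ↔ j = x := by
  intro j
  rw [pending_concat]
  constructor
  · rintro ⟨h1, h2⟩
    rcases (hpend j).1 h1 with rfl | rfl
    · rfl
    · exact absurd (alone_vp_ft hxy) h2
  · rintro rfl
    exact ⟨(hpend j).2 (Or.inl rfl), not_alone_vp_ft hxy hxy⟩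

lemma pend_ext_zv {h : Hist n} {x : Fin n} (hpend : ∀ j, pending h j ↔ j = x) :
    ∀ j, pending (h ++ [zv n]) j ↔ j = x := by
  intro j
  rw [pending_concat]
  exact ⟨fun c => (hpend j).1 c.1, fun c => ⟨(hpend j).2 c, not_alone_zv j⟩⟩

lemma age_pers {p : ℕ → ℝ} (h : Hist n) (j : Fin n) :
    ageProtocol p (personal h j) = p (h.length + 1) := by
  show p ((personal h j).length + 1) = p (h.length + 1)
  rw [personal_length]

lemma stepProb_age_pair {p : ℕ → ℝ} {h : Hist n} {x y : Fin n} (hxy : x ≠ y)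
    (hpend : ∀ j, pending h j ↔ (j = x ∨ j = y)) (a b : Bool) :
    stepProb (fun _ : Fin n => ageProtocol p) h (vp x y a b)
      = (if a = true then p (h.length + 1) else 1 - p (h.length + 1))
        * (if b = true then p (h.length + 1) else 1 - p (h.length + 1)) := by
  rw [stepProb_eval_pair hxy hpend (vp x y a b) (fun j hjx hjy => vp_other hjx hjy _ _),
    vp_fst, vp_snd hxy]
  rw [age_pers h x, age_pers h y]

-- toReal helpers
lemma toReal_ofReal_mul {c : ℝ} {Z : ℝ≥0∞} (hc : 0 ≤ c) (hZ : Z ≠ ⊤) :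
    (ENNReal.ofReal c * Z).toReal = c * Z.toReal := by
  rw [ENNReal.toReal_mul, ENNReal.toReal_ofReal hc]

lemma ofReal_mul_ne_top {c : ℝ} {Z : ℝ≥0∞} (hZ : Z ≠ ⊤) : ENNReal.ofReal c * Z ≠ ⊤ :=
  ENNReal.mul_ne_top ENNReal.ofReal_ne_top hZ

lemma one_le_toReal {Z : ℝ≥0∞} (h1 : 1 ≤ Z) (hZ : Z ≠ ⊤) : 1 ≤ Z.toReal := by
  have := ENNReal.toReal_mono hZ h1
  simpa using this

-- ====================== part 7: pkgA ======================

lemma real_pkg {q CR XR : ℝ} (hq0 : 0 < q) (hq1 : q < 1) (hC1 : 1 ≤ CR)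
    (hXReq : XR = 1 + (1-q)*(1-q)*CR + (1-q)*q + q*q*CR)
    (hVTr : XR ≤ 1 + q * CR) (hVQr : XR ≤ 1 + ((1-q)*CR + q)) :
    1/2 < q ∧ (2*q - 1)*CR = q ∧ XR = 1 + q*CR := by
  have hqn : 0 ≤ q := le_of_lt hq0
  have hqn1 : 0 ≤ 1 - q := by linarith
  have hVT_eq : 1 + q * CR = XR := by
    nlinarith [mul_nonneg hqn1 (sub_nonneg.2 hVQr), mul_nonneg hqn (sub_nonneg.2 hVTr)]
  have hVQ_eq : 1 + ((1-q)*CR + q) = XR := by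
    nlinarith [mul_nonneg hqn1 (sub_nonneg.2 hVQr), mul_nonneg hqn (sub_nonneg.2 hVTr)]
  have hmain : (2*q - 1) * CR = q := by nlinarith [hVT_eq, hVQ_eq]
  have hhalf : 1/2 < q := by nlinarith [hC1, hq0, hmain]
  exact ⟨hhalf, hmain, hVT_eq.symm⟩

lemma pkgA {p : ℕ → ℝ} (hn : 2 ≤ n) (hp : ∀ t, 1 ≤ t → 0 ≤ p t ∧ p t ≤ 1)
    (heq : IsEquilibrium (fun _ : Fin n => ageProtocol p))
    (hfin : ∀ i : Fin n, condLatency (fun _ : Fin n => ageProtocol p) [] i < ⊤)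
    {x y : Fin n} (hxy : x ≠ y) {h : Hist n}
    (hpos : 0 < histProb (fun _ : Fin n => ageProtocol p) h)
    (hpend : ∀ j, pending h j ↔ (j = x ∨ j = y))
    (hq1 : p (h.length + 1) < 1) :
    1/2 < p (h.length + 1)
    ∧ (2 * p (h.length + 1) - 1)
        * (condRemaining (fun _ : Fin n => ageProtocol p) (h ++ [vp x y false false]) x).toReal
        = p (h.length + 1)
    ∧ (condRemaining (fun _ : Fin n => ageProtocol p) h x).toReal
        = 1 + p (h.length + 1)
          * (condRemaining (fun _ : Fin n => ageProtocol p) (h ++ [vp x y false false]) x).toReal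
    ∧ p (h.length + 1 + 1) = 1 := by
  have hq0 : 0 < p (h.length + 1) := pos_p hn hp heq _
  have hvalid := valid_age (n := n) hp
  set q := p (h.length + 1) with hqdef
  -- positive probabilities of the one-step extensions
  have hstep00 : stepProb (fun _ : Fin n => ageProtocol p) h (vp x y false false)
      = (1-q)*(1-q) := by
    rw [stepProb_age_pair hxy hpend]; norm_num; rfl
  have hstep01 : stepProb (fun _ : Fin n => ageProtocol p) h (vp x y false true)
      = (1-q)*q := by
    rw [stepProb_age_pair hxy hpend]; norm_num; rfl
  have hstep11 : stepProb (fun _ : Fin n => ageProtocol p) h (vp x y true true)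
      = q*q := by
    rw [stepProb_age_pair hxy hpend]; norm_num; rfl
  have hpos00 : 0 < histProb (fun _ : Fin n => ageProtocol p) (h ++ [vp x y false false]) := by
    rw [histProb_concat, hstep00]
    exact mul_pos hpos (mul_pos (by linarith) (by linarith))
  have hpos01 : 0 < histProb (fun _ : Fin n => ageProtocol p) (h ++ [vp x y false true]) := by
    rw [histProb_concat, hstep01]
    exact mul_pos hpos (mul_pos (by linarith) hq0)
  have hpos11 : 0 < histProb (fun _ : Fin n => ageProtocol p) (h ++ [vp x y true true]) := by
    rw [histProb_concat, hstep11]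
    exact mul_pos hpos (mul_pos hq0 hq0)
  -- lone state value
  obtain ⟨hC01, hp2⟩ := lone_value hp heq hpos01 (pend_ext_ft hxy hpend)
  have hp2' : p (h.length + 1 + 1) = 1 := by simpa using hp2
  -- finiteness
  have hfinh := (condRemaining_lt_top hvalid hpos (hfin x)).ne
  have hfin00 := (condRemaining_lt_top hvalid hpos00 (hfin x)).ne
  -- transfer tt -> ff
  have htrans : condRemaining (fun _ : Fin n => ageProtocol p) (h ++ [vp x y true true]) x
      = condRemaining (fun _ : Fin n => ageProtocol p) (h ++ [vp x y false false]) x :=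
    transfer_age (by simp)
      (fun j => (pend_ext_tt hxy hpend j).trans (pend_ext_ff hpend j).symm) x
  -- recursion under FA
  have hrec := pair_rec (G := fun _ : Fin n => ageProtocol p) hvalid hxy hpend
  simp only [age_pers] at hrec
  rw [hC01, htrans, mul_one, ← hqdef] at hrec
  -- deviation: transmit now
  set gT : Protocol := fun l => if l.length = h.length then 1 else p (l.length + 1) with hgT
  have hgTval : ValidProtocol gT := by
    intro l
    show 0 ≤ (if l.length = h.length then (1:ℝ) else p (l.length + 1))
      ∧ (if l.length = h.length then (1:ℝ) else p (l.length + 1)) ≤ 1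
    split_ifs
    · norm_num
    · exact hp _ (by omega)
  have hrecT := pair_rec (G := Function.update (fun _ : Fin n => ageProtocol p) x gT)
    (valid_update hvalid hgTval) hxy hpend
  have hTx : Function.update (fun _ : Fin n => ageProtocol p) x gT x (personal h x) = 1 := by
    rw [Function.update_self]
    show (if (personal h x).length = h.length then (1:ℝ) else p ((personal h x).length + 1)) = 1
    rw [if_pos (personal_length h x)]
  have hTy : Function.update (fun _ : Fin n => ageProtocol p) x gT y (personal h y) = q := by
    rw [Function.update_of_ne (Ne.symm hxy)]
    exact age_pers h y
  rw [hTx, hTy] at hrecT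
  simp only [sub_self, zero_mul, ENNReal.ofReal_zero, add_zero, one_mul] at hrecT
  have hagreeT : ∀ l : List Bool, (h ++ [vp x y true true]).length ≤ l.length →
      gT l = p (l.length + 1) := by
    intro l hl
    show (if l.length = h.length then (1:ℝ) else p (l.length + 1)) = p (l.length + 1)
    rw [if_neg (by simp at hl; omega)]
  rw [transfer_update_age hagreeT x, htrans] at hrecT
  have hleT := equilibrium_remaining heq hpos hgTval x
  rw [hrecT] at hleT
  -- deviation: stay quiet now
  set gQ : Protocol := fun l => if l.length = h.length then 0 else p (l.length + 1) with hgQ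
  have hgQval : ValidProtocol gQ := by
    intro l
    show 0 ≤ (if l.length = h.length then (0:ℝ) else p (l.length + 1))
      ∧ (if l.length = h.length then (0:ℝ) else p (l.length + 1)) ≤ 1
    split_ifs
    · norm_num
    · exact hp _ (by omega)
  have hrecQ := pair_rec (G := Function.update (fun _ : Fin n => ageProtocol p) x gQ)
    (valid_update hvalid hgQval) hxy hpend
  have hQx : Function.update (fun _ : Fin n => ageProtocol p) x gQ x (personal h x) = 0 := by
    rw [Function.update_self]
    show (if (personal h x).length = h.length then (0:ℝ) else p ((personal h x).length + 1)) = 0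
    rw [if_pos (personal_length h x)]
  have hQy : Function.update (fun _ : Fin n => ageProtocol p) x gQ y (personal h y) = q := by
    rw [Function.update_of_ne (Ne.symm hxy)]
    exact age_pers h y
  rw [hQx, hQy] at hrecQ
  simp only [sub_zero, one_mul, zero_mul, ENNReal.ofReal_zero, add_zero] at hrecQ
  have hagreeQff : ∀ l : List Bool, (h ++ [vp x y false false]).length ≤ l.length →
      gQ l = p (l.length + 1) := by
    intro l hl
    show (if l.length = h.length then (0:ℝ) else p (l.length + 1)) = p (l.length + 1)
    rw [if_neg (by simp at hl; omega)]
  have hagreeQft : ∀ l : List Bool, (h ++ [vp x y false true]).length ≤ l.length →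
      gQ l = p (l.length + 1) := by
    intro l hl
    show (if l.length = h.length then (0:ℝ) else p (l.length + 1)) = p (l.length + 1)
    rw [if_neg (by simp at hl; omega)]
  rw [transfer_update_age hagreeQff x, transfer_update_age hagreeQft x, hC01, mul_one] at hrecQ
  have hleQ := equilibrium_remaining heq hpos hgQval x
  rw [hrecQ] at hleQ
  -- convert to real numbers
  set CR := (condRemaining (fun _ : Fin n => ageProtocol p) (h ++ [vp x y false false]) x).toReal
    with hCRdef
  set XR := (condRemaining (fun _ : Fin n => ageProtocol p) h x).toReal with hXRdef
  have hCnn : 0 ≤ CR := ENNReal.toReal_nonneg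
  have hC1 : 1 ≤ CR := one_le_toReal
    (one_le_condRemaining _ ((pend_ext_ff hpend x).2 (Or.inl rfl))) hfin00
  have hCof : condRemaining (fun _ : Fin n => ageProtocol p) (h ++ [vp x y false false]) x
      = ENNReal.ofReal CR := (ENNReal.ofReal_toReal hfin00).symm
  have hEof : condRemaining (fun _ : Fin n => ageProtocol p) h x
      = ENNReal.ofReal XR := (ENNReal.ofReal_toReal hfinh).symm
  -- real versions
  have hqn : 0 ≤ q := le_of_lt hq0
  have hqn1 : 0 ≤ 1 - q := by linarith
  have hXnn : 0 ≤ XR := ENNReal.toReal_nonneg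
  have nn1 : 0 ≤ (1-q)*(1-q)*CR := mul_nonneg (mul_nonneg hqn1 hqn1) hCnn
  have nn2 : 0 ≤ (1-q)*q := mul_nonneg hqn1 hqn
  have nn3 : 0 ≤ q*q*CR := mul_nonneg (mul_nonneg hqn hqn) hCnn
  have nn4 : 0 ≤ q*CR := mul_nonneg hqn hCnn
  have nn5 : 0 ≤ (1-q)*CR := mul_nonneg hqn1 hCnn
  have hXReq : XR = 1 + (1-q)*(1-q)*CR + (1-q)*q + q*q*CR := by
    have hcollapse : (1:ℝ≥0∞) + ENNReal.ofReal ((1-q)*(1-q)) * ENNReal.ofReal CR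
        + ENNReal.ofReal ((1-q)*q) + ENNReal.ofReal (q*q) * ENNReal.ofReal CR
        = ENNReal.ofReal (1 + (1-q)*(1-q)*CR + (1-q)*q + q*q*CR) := by
      rw [← ENNReal.ofReal_mul (mul_nonneg hqn1 hqn1), ← ENNReal.ofReal_mul (mul_nonneg hqn hqn),
        ← ENNReal.ofReal_one,
        ← ENNReal.ofReal_add (p := (1:ℝ)) (by norm_num) nn1,
        ← ENNReal.ofReal_add (add_nonneg (by norm_num) nn1) nn2,
        ← ENNReal.ofReal_add (add_nonneg (add_nonneg (by norm_num) nn1) nn2) nn3]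
    have hthis := hrec
    rw [hEof, hCof, hcollapse] at hthis
    exact (ENNReal.ofReal_eq_ofReal_iff hXnn
      (add_nonneg (add_nonneg (add_nonneg (by norm_num) nn1) nn2) nn3)).1 hthis
  have hVTr : XR ≤ 1 + q * CR := by
    have hcollapse : (1:ℝ≥0∞) + ENNReal.ofReal q * ENNReal.ofReal CR
        = ENNReal.ofReal (1 + q*CR) := by
      rw [← ENNReal.ofReal_mul hqn, ← ENNReal.ofReal_one,
        ← ENNReal.ofReal_add (p := (1:ℝ)) (by norm_num) nn4]
    have hthis := hleT
    rw [hEof, hCof, hcollapse] at hthis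
    exact (ENNReal.ofReal_le_ofReal_iff (add_nonneg (by norm_num) nn4)).1 hthis
  have hVQr : XR ≤ 1 + ((1-q)*CR + q) := by
    have hcollapse : (1:ℝ≥0∞) + ENNReal.ofReal (1-q) * ENNReal.ofReal CR + ENNReal.ofReal q
        = ENNReal.ofReal (1 + ((1-q)*CR + q)) := by
      rw [← ENNReal.ofReal_mul hqn1, ← ENNReal.ofReal_one,
        ← ENNReal.ofReal_add (p := (1:ℝ)) (by norm_num) nn5,
        ← ENNReal.ofReal_add (add_nonneg (by norm_num) nn5) hqn]
      rw [ENNReal.ofReal_eq_ofReal_iff (by linarith [nn5]) (by linarith [nn5])]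
      ring
    have hthis := hleQ
    rw [hEof, hCof, hcollapse] at hthis
    exact (ENNReal.ofReal_le_ofReal_iff (by linarith [nn5])).1 hthis
  obtain ⟨hhalf, hmain, hXfin⟩ := real_pkg hq0 hq1 hC1 hXReq hVTr hVQr
  exact ⟨hhalf, hmain, hXfin, hp2'⟩

-- ====================== part 8: pkgB ======================

lemma pkgB {p : ℕ → ℝ} (hn : 2 ≤ n) (hp : ∀ t, 1 ≤ t → 0 ≤ p t ∧ p t ≤ 1)
    (heq : IsEquilibrium (fun _ : Fin n => ageProtocol p))
    (hfin : ∀ i : Fin n, condLatency (fun _ : Fin n => ageProtocol p) [] i < ⊤)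
    {x y : Fin n} (hxy : x ≠ y) {h : Hist n}
    (hpos : 0 < histProb (fun _ : Fin n => ageProtocol p) h)
    (hpend : ∀ j, pending h j ↔ (j = x ∨ j = y))
    (hq1 : p (h.length + 1) < 1) :
    (condRemaining (fun _ : Fin n => ageProtocol p) h x).toReal ≤ 7/2 := by
  have hq0 : 0 < p (h.length + 1) := pos_p hn hp heq _
  have hvalid := valid_age (n := n) hp
  set q := p (h.length + 1) with hqdef
  have hqn : 0 ≤ q := le_of_lt hq0
  have hqn1 : 0 ≤ 1 - q := by linarith
  have hstep00 : stepProb (fun _ : Fin n => ageProtocol p) h (vp x y false false)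
      = (1-q)*(1-q) := by
    rw [stepProb_age_pair hxy hpend]; norm_num; rfl
  have hpos00 : 0 < histProb (fun _ : Fin n => ageProtocol p) (h ++ [vp x y false false]) := by
    rw [histProb_concat, hstep00]
    exact mul_pos hpos (mul_pos (by linarith) (by linarith))
  have hpend00 := pend_ext_ff hpend
  have hpend01 := pend_ext_ft hxy hpend
  have hlen00 : (h ++ [vp x y false false]).length = h.length + 1 := by simp
  have hlen01 : (h ++ [vp x y false true]).length = h.length + 1 := by simp
  obtain ⟨hhalf, hEqA, hEqB, hp2⟩ := pkgA hn hp heq hfin hxy hpos hpend hq1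
  -- the two-slot-quiet deviation
  set g2 : Protocol := fun l =>
    if l.length = h.length ∨ l.length = h.length + 1 then 0 else p (l.length + 1) with hg2
  have hg2val : ValidProtocol g2 := by
    intro l
    show 0 ≤ (if l.length = h.length ∨ l.length = h.length + 1 then (0:ℝ) else p (l.length + 1))
      ∧ (if l.length = h.length ∨ l.length = h.length + 1 then (0:ℝ) else p (l.length + 1)) ≤ 1
    split_ifs
    · norm_num
    · exact hp _ (by omega)
  have hval3 := valid_update (i := x) hvalid hg2val
  -- main recursion under the deviation
  have hrec3 := pair_rec (G := Function.update (fun _ : Fin n => ageProtocol p) x g2)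
    hval3 hxy hpend
  have h3x : Function.update (fun _ : Fin n => ageProtocol p) x g2 x (personal h x) = 0 := by
    rw [Function.update_self]
    show (if (personal h x).length = h.length ∨ (personal h x).length = h.length + 1
      then (0:ℝ) else p ((personal h x).length + 1)) = 0
    rw [if_pos (Or.inl (personal_length h x))]
  have h3y : Function.update (fun _ : Fin n => ageProtocol p) x g2 y (personal h y) = q := by
    rw [Function.update_of_ne (Ne.symm hxy)]
    exact age_pers h y
  rw [h3x, h3y] at hrec3
  simp only [sub_zero, one_mul, zero_mul, ENNReal.ofReal_zero, add_zero] at hrec3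
  -- the deviator's value at the lone continuation state
  have hlone3 := lone_rec (G := Function.update (fun _ : Fin n => ageProtocol p) x g2)
    hval3 hpend01
  have h3x1 : Function.update (fun _ : Fin n => ageProtocol p) x g2 x
      (personal (h ++ [vp x y false true]) x) = 0 := by
    rw [Function.update_self]
    show (if (personal (h ++ [vp x y false true]) x).length = h.length
        ∨ (personal (h ++ [vp x y false true]) x).length = h.length + 1
      then (0:ℝ) else p ((personal (h ++ [vp x y false true]) x).length + 1)) = 0
    rw [if_pos (Or.inr (by rw [personal_length, hlen01]))]
  rw [h3x1] at hlone3
  simp only [sub_zero, ENNReal.ofReal_one, one_mul] at hlone3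
  have hagree2 : ∀ (m : ℕ), h.length + 1 + 1 ≤ m → ∀ l : List Bool, m ≤ l.length →
      g2 l = p (l.length + 1) := by
    intro m hm l hl
    show (if l.length = h.length ∨ l.length = h.length + 1
      then (0:ℝ) else p (l.length + 1)) = p (l.length + 1)
    rw [if_neg (by omega)]
  have htr1 : condRemaining (Function.update (fun _ : Fin n => ageProtocol p) x g2)
      ((h ++ [vp x y false true]) ++ [zv n]) x
      = condRemaining (fun _ : Fin n => ageProtocol p)
        ((h ++ [vp x y false true]) ++ [zv n]) x :=
    transfer_update_age (fun l hl => hagree2 _ (by simp) l hl) x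
  rw [htr1] at hlone3
  -- the deviator's value at the pair continuation state
  have hrec00 := pair_rec (G := Function.update (fun _ : Fin n => ageProtocol p) x g2)
    hval3 hxy hpend00
  have h3x0 : Function.update (fun _ : Fin n => ageProtocol p) x g2 x
      (personal (h ++ [vp x y false false]) x) = 0 := by
    rw [Function.update_self]
    show (if (personal (h ++ [vp x y false false]) x).length = h.length
        ∨ (personal (h ++ [vp x y false false]) x).length = h.length + 1
      then (0:ℝ) else p ((personal (h ++ [vp x y false false]) x).length + 1)) = 0
    rw [if_pos (Or.inr (by rw [personal_length, hlen00]))]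
  have h3y0 : Function.update (fun _ : Fin n => ageProtocol p) x g2 y
      (personal (h ++ [vp x y false false]) y) = 1 := by
    rw [Function.update_of_ne (Ne.symm hxy), age_pers, hlen00]
    exact hp2
  rw [h3x0, h3y0] at hrec00
  simp only [sub_zero, sub_self, one_mul, mul_zero, zero_mul, mul_one,
    ENNReal.ofReal_zero, add_zero, ENNReal.ofReal_one] at hrec00
  have htr2 : condRemaining (Function.update (fun _ : Fin n => ageProtocol p) x g2)
      ((h ++ [vp x y false false]) ++ [vp x y false true]) x
      = condRemaining (fun _ : Fin n => ageProtocol p)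
        ((h ++ [vp x y false false]) ++ [vp x y false true]) x :=
    transfer_update_age (fun l hl => hagree2 _ (by simp) l hl) x
  rw [htr2] at hrec00
  -- identify the two lone states at time t+2
  have hZeq : condRemaining (fun _ : Fin n => ageProtocol p)
      ((h ++ [vp x y false false]) ++ [vp x y false true]) x
      = condRemaining (fun _ : Fin n => ageProtocol p)
        ((h ++ [vp x y false true]) ++ [zv n]) x :=
    transfer_age (by simp)
      (fun j => (pend_ext_ft hxy hpend00 j).trans ((pend_ext_zv hpend01) j).symm) x
  rw [hZeq] at hrec00
  -- bound the lone value Z at time t+2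
  have hpendL1 := pend_ext_zv hpend01
  have hrecZ := lone_rec (G := fun _ : Fin n => ageProtocol p) hvalid hpendL1
  simp only [age_pers] at hrecZ
  have hlenL1 : ((h ++ [vp x y false true]) ++ [zv n]).length = h.length + 1 + 1 := by simp
  rw [hlenL1] at hrecZ
  have hZbound : condRemaining (fun _ : Fin n => ageProtocol p)
      ((h ++ [vp x y false true]) ++ [zv n]) x ≤ ENNReal.ofReal (3/2) := by
    by_cases hq3 : p (h.length + 1 + 1 + 1) < 1
    · -- build a reachable lone state at time t+3 and use its value
      rcases keep_many (pos_p hn hp heq) hxy 1 hpos00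
        ((hpend00 x).2 (Or.inl rfl)) ((hpend00 y).2 (Or.inr rfl)) with ⟨h2, hl2, hpos2, hiff2⟩
      have hpend2 : ∀ j, pending h2 j ↔ (j = x ∨ j = y) :=
        fun j => (hiff2 j).trans (hpend00 j)
      have hl2' : h2.length = h.length + 1 + 1 := by rw [hl2, hlen00]
      have hq0' : 0 < p (h2.length + 1) := pos_p hn hp heq _
      have hq1' : p (h2.length + 1) < 1 := by rw [hl2']; exact hq3
      rcases drop_one hq0' hq1' hpos2 ((hpend2 y).2 (Or.inr rfl)) with ⟨hpos3, hiff3⟩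
      have hpend3 : ∀ j, pending (h2 ++ [ev y]) j ↔ j = x := by
        intro j
        rw [hiff3 j]
        constructor
        · rintro ⟨h1, h2'⟩
          rcases (hpend2 j).1 h1 with rfl | rfl
          · rfl
          · exact absurd rfl h2'
        · intro hj
          refine ⟨(hpend2 j).2 (Or.inl hj), ?_⟩
          rw [hj]
          exact hxy
      obtain ⟨hval3', _⟩ := lone_value hp heq hpos3 hpend3
      obtain ⟨hhalf3, _, _, _⟩ := pkgA hn hp heq hfin hxy hpos2 hpend2 hq1'
      have hhalf3' : 1/2 < p (h.length + 1 + 1 + 1) := by rw [← hl2']; exact hhalf3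
      have htr3 : condRemaining (fun _ : Fin n => ageProtocol p)
          (((h ++ [vp x y false true]) ++ [zv n]) ++ [zv n]) x
          = condRemaining (fun _ : Fin n => ageProtocol p) (h2 ++ [ev y]) x :=
        transfer_age (by simp [hl2']) (fun j => ((pend_ext_zv hpendL1) j).trans (hpend3 j).symm) x
      rw [htr3, hval3', mul_one] at hrecZ
      rw [hrecZ, ← ENNReal.ofReal_one,
        ← ENNReal.ofReal_add (by norm_num) (by linarith [hq3] : (0:ℝ) ≤ 1 - p (h.length + 1 + 1 + 1))]
      apply ENNReal.ofReal_le_ofReal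
      linarith [hhalf3']
    · have hq3' : p (h.length + 1 + 1 + 1) = 1 :=
        le_antisymm (hp _ (by omega)).2 (not_lt.1 hq3)
      rw [hrecZ, hq3', sub_self, ENNReal.ofReal_zero, zero_mul, add_zero, ← ENNReal.ofReal_one]
      apply ENNReal.ofReal_le_ofReal
      norm_num
  -- assemble the deviation value
  rw [hlone3, hrec00] at hrec3
  have hcomb : (1:ℝ≥0∞) + ENNReal.ofReal (1-q)
        * (1 + condRemaining (fun _ : Fin n => ageProtocol p)
            ((h ++ [vp x y false true]) ++ [zv n]) x)
      + ENNReal.ofReal q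
        * (1 + condRemaining (fun _ : Fin n => ageProtocol p)
            ((h ++ [vp x y false true]) ++ [zv n]) x)
      = 1 + (1 + condRemaining (fun _ : Fin n => ageProtocol p)
            ((h ++ [vp x y false true]) ++ [zv n]) x) := by
    rw [add_assoc, ← add_mul, ← ENNReal.ofReal_add hqn1 hqn]
    norm_num
  rw [hcomb] at hrec3
  -- equilibrium inequality and conversion to reals
  have hle := equilibrium_remaining heq hpos hg2val x
  rw [hrec3] at hle
  have hle2 : condRemaining (fun _ : Fin n => ageProtocol p) h x ≤ ENNReal.ofReal (7/2) := by
    refine le_trans hle ?_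
    have : (1:ℝ≥0∞) + (1 + ENNReal.ofReal (3/2)) = ENNReal.ofReal (7/2) := by
      rw [← ENNReal.ofReal_one, ← ENNReal.ofReal_add (by norm_num) (by norm_num),
        ← ENNReal.ofReal_add (by norm_num) (by norm_num)]
      norm_num
    rw [← this]
    exact add_le_add_right (add_le_add_right hZbound 1) 1
  have := ENNReal.toReal_mono ENNReal.ofReal_ne_top hle2
  rwa [ENNReal.toReal_ofReal (by norm_num)] at this

-- ====================== part 9: stretch and the main theorem ======================

lemma pair_stretch {p : ℕ → ℝ} (hp : ∀ t, 1 ≤ t → 0 ≤ p t ∧ p t ≤ 1)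
    (hfin : ∀ i : Fin n, condLatency (fun _ : Fin n => ageProtocol p) [] i < ⊤)
    {x y : Fin n} (hxy : x ≠ y) {h : Hist n}
    (hpos : 0 < histProb (fun _ : Fin n => ageProtocol p) h)
    (hpend : ∀ j, pending h j ↔ (j = x ∨ j = y))
    (hq1 : p (h.length + 1) = 1) :
    (condRemaining (fun _ : Fin n => ageProtocol p) h x).toReal
      = 1 + (condRemaining (fun _ : Fin n => ageProtocol p) (h ++ [vp x y true true]) x).toReal
    ∧ 0 < histProb (fun _ : Fin n => ageProtocol p) (h ++ [vp x y true true]) := by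
  have hvalid := valid_age (n := n) hp
  have hstep11 : stepProb (fun _ : Fin n => ageProtocol p) h (vp x y true true)
      = p (h.length + 1) * p (h.length + 1) := by
    rw [stepProb_age_pair hxy hpend]; norm_num
  have hpos11 : 0 < histProb (fun _ : Fin n => ageProtocol p) (h ++ [vp x y true true]) := by
    rw [histProb_concat, hstep11, hq1]
    simpa using hpos
  have hrec := pair_rec (G := fun _ : Fin n => ageProtocol p) hvalid hxy hpend
  simp only [age_pers] at hrec
  rw [hq1] at hrec
  simp only [sub_self, zero_mul, mul_zero, mul_one, one_mul, ENNReal.ofReal_zero, add_zero,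
    zero_add, ENNReal.ofReal_one] at hrec
  have hfin11 := (condRemaining_lt_top hvalid hpos11 (hfin x)).ne
  refine ⟨?_, hpos11⟩
  rw [hrec, ENNReal.toReal_add (by simp) hfin11, ENNReal.toReal_one]

theorem no_age_based_equilibrium_with_finite_latency_aux :
    ∀ (n : ℕ) (p : ℕ → ℝ), 2 ≤ n →
      (∀ t : ℕ, 1 ≤ t → 0 ≤ p t ∧ p t ≤ 1) →
      (∀ i : Fin n, condLatency (fun _ : Fin n => ageProtocol p) [] i < ⊤) →
      ¬ IsEquilibrium (fun _ : Fin n => ageProtocol p) := by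
  intro n p hn hp hfin heq
  obtain ⟨x, y, hxy⟩ : ∃ x y : Fin n, x ≠ y :=
    ⟨⟨0, by omega⟩, ⟨1, by omega⟩, by intro c; simp [Fin.mk.injEq] at c⟩
  obtain ⟨T0, hT0⟩ := pair_reach hn hp heq (hfin _) hxy
  choose PH hPH using hT0
  obtain ⟨X, hXspec⟩ : ∃ X : ℕ → ℝ, ∀ t (ht : T0 ≤ t),
      X t = (condRemaining (fun _ : Fin n => ageProtocol p) (PH t ht) x).toReal :=
    ⟨fun t => if ht : T0 ≤ t
      then (condRemaining (fun _ : Fin n => ageProtocol p) (PH t ht) x).toReal else 0,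
      fun t ht => dif_pos ht⟩
  have hXval : ∀ t (ht : T0 ≤ t) (h : Hist n), h.length = t →
      (∀ j, pending h j ↔ (j = x ∨ j = y)) →
      (condRemaining (fun _ : Fin n => ageProtocol p) h x).toReal = X t := by
    intro t ht h hl hpd
    rw [hXspec t ht]
    exact congrArg ENNReal.toReal (transfer_age (hl.trans (hPH t ht).1.symm)
      (fun j => (hpd j).trans (((hPH t ht).2.2) j).symm) x)
  have hX1 : ∀ t, T0 ≤ t → 1 ≤ X t := by
    intro t ht
    rw [hXspec t ht]
    exact one_le_toReal (one_le_condRemaining _ (((hPH t ht).2.2 x).2 (Or.inl rfl)))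
      (condRemaining_lt_top (valid_age hp) (hPH t ht).2.1 (hfin x)).ne
  have hA : ∀ t, T0 ≤ t → p (t+1) < 1 →
      1/2 < p (t+1) ∧ (2*p (t+1) - 1) * X (t+1) = p (t+1)
      ∧ X t = 1 + p (t+1) * X (t+1) ∧ p (t+1+1) = 1 ∧ X t ≤ 7/2 := by
    intro t ht hq
    obtain ⟨hl, hpos, hpd⟩ := hPH t ht
    have hq' : p ((PH t ht).length + 1) < 1 := by rw [hl]; exact hq
    obtain ⟨c1, c2, c3, c4⟩ := pkgA hn hp heq hfin hxy hpos hpd hq'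
    have c5 := pkgB hn hp heq hfin hxy hpos hpd hq'
    have hXt : (condRemaining (fun _ : Fin n => ageProtocol p) (PH t ht) x).toReal = X t :=
      hXval t ht _ hl hpd
    have hX00 : (condRemaining (fun _ : Fin n => ageProtocol p)
        ((PH t ht) ++ [vp x y false false]) x).toReal = X (t+1) :=
      hXval (t+1) (by omega) _ (by simp [hl]) (pend_ext_ff hpd)
    rw [hl] at c1 c2 c3 c4
    rw [hX00] at c2 c3
    rw [hXt] at c3
    rw [hXt] at c5
    exact ⟨c1, c2, c3, c4, c5⟩
  have hS : ∀ t, T0 ≤ t → p (t+1) = 1 → X t = 1 + X (t+1) := by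
    intro t ht hq
    obtain ⟨hl, hpos, hpd⟩ := hPH t ht
    have hq' : p ((PH t ht).length + 1) = 1 := by rw [hl]; exact hq
    obtain ⟨c1, c2⟩ := pair_stretch hp hfin hxy hpos hpd hq'
    have hXt : (condRemaining (fun _ : Fin n => ageProtocol p) (PH t ht) x).toReal = X t :=
      hXval t ht _ hl hpd
    have hX11 : (condRemaining (fun _ : Fin n => ageProtocol p)
        ((PH t ht) ++ [vp x y true true]) x).toReal = X (t+1) :=
      hXval (t+1) (by omega) _ (by simp [hl]) (pend_ext_tt hxy hpd)
    rw [hXt, hX11] at c1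
    exact c1
  have hnext : ∀ t, T0 ≤ t → ∃ t', t ≤ t' ∧ T0 ≤ t' ∧ p (t'+1) < 1 := by
    intro t ht
    rcases lt_one_p hn hp (hfin _) t with ⟨u, hu, hu1⟩
    exact ⟨u - 1, by omega, by omega, by rwa [show u - 1 + 1 = u by omega]⟩
  have iter : ∀ L : ℝ, 1 ≤ L →
      (∀ t, T0 ≤ t → p (t+1) < 1 → L ≤ X (t+1)) →
      (∀ t, T0 ≤ t → p (t+1) < 1 → 2 + L^2/(2*L-1) ≤ X (t+1)) := by
    intro L hL hprev t ht hq
    have hex : ∃ m : ℕ, p (t+1+1+m+1) < 1 := by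
      rcases hnext (t+1+1) (by omega) with ⟨t', h1, h2, h3⟩
      exact ⟨t' - (t+1+1), by rwa [show t+1+1+(t'-(t+1+1))+1 = t'+1 by omega]⟩
    have hm0spec : p (t+1+1+(Nat.find hex)+1) < 1 := Nat.find_spec hex
    have hones : ∀ w, t+1 ≤ w → w < t+1+1+(Nat.find hex) → p (w+1) = 1 := by
      intro w hw1 hw2
      rcases Nat.eq_or_lt_of_le hw1 with heqw | hw3
      · rw [← heqw]
        exact (hA t ht hq).2.2.2.1
      · have hnl : ¬ p (w+1) < 1 := by
          have := Nat.find_min hex (m := w - (t+1+1)) (by omega)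
          rwa [show t+1+1+(w-(t+1+1))+1 = w+1 by omega] at this
        exact le_antisymm (hp _ (by omega)).2 (not_lt.1 hnl)
    have hchain : ∀ d : ℕ, d ≤ (Nat.find hex) + 1 → X (t+1) = d + X (t+1+d) := by
      intro d
      induction d with
      | zero => intro _; simp
      | succ d ih =>
          intro hd
          rw [ih (by omega)]
          have hw : X (t+1+d) = 1 + X (t+1+d+1) :=
            hS (t+1+d) (by omega) (hones (t+1+d) (by omega) (by omega))
          rw [hw, show t+1+(d+1) = t+1+d+1 by omega]
          push_cast
          ring
    have hXt1 : X (t+1) = ((Nat.find hex : ℝ)+1) + X (t+1+1+(Nat.find hex)) := by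
      have := hchain ((Nat.find hex)+1) le_rfl
      rw [show t+1+((Nat.find hex)+1) = t+1+1+(Nat.find hex) by omega] at this
      rw [this]
      push_cast
      ring
    obtain ⟨hhalf', heq2', heq3', _, hle7'⟩ := hA (t+1+1+(Nat.find hex)) (by omega) hm0spec
    have hprev' : L ≤ X (t+1+1+(Nat.find hex)+1) := hprev _ (by omega) hm0spec
    have hX1' : 1 ≤ X (t+1+1+(Nat.find hex)+1) := hX1 _ (by omega)
    set XX := X (t+1+1+(Nat.find hex)+1) with hXXdef
    set qq := p (t+1+1+(Nat.find hex)+1) with hqqdef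
    have h2X : 0 < 2*XX - 1 := by linarith
    have hphi : qq * XX * (2*XX - 1) = XX^2 := by nlinarith [heq2']
    have hmono : L^2/(2*L-1) ≤ XX^2/(2*XX - 1) := by
      have h2L : 0 < 2*L - 1 := by linarith
      rw [div_le_div_iff₀ h2L h2X]
      nlinarith [mul_nonneg (sub_nonneg.2 hprev')
        (by nlinarith : (0:ℝ) ≤ 2*L*XX - L - XX)]
    have hqqXX : qq * XX = XX^2/(2*XX-1) := by
      rw [eq_div_iff (ne_of_gt h2X)]
      exact hphi
    have hfind1 : (1:ℝ) ≤ (Nat.find hex : ℝ) + 1 := by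
      have : (0:ℝ) ≤ (Nat.find hex : ℝ) := Nat.cast_nonneg _
      linarith
    calc 2 + L^2/(2*L-1) ≤ 2 + XX^2/(2*XX-1) := by linarith [hmono]
      _ = 2 + qq * XX := by rw [hqqXX]
      _ ≤ ((Nat.find hex : ℝ)+1) + (1 + qq * XX) := by linarith [hfind1]
      _ = X (t+1) := by rw [hXt1, heq3']
  have base : ∀ t, T0 ≤ t → p (t+1) < 1 → (1:ℝ) ≤ X (t+1) :=
    fun t ht _ => hX1 (t+1) (by omega)
  have s1 : ∀ t, T0 ≤ t → p (t+1) < 1 → (3:ℝ) ≤ X (t+1) := by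
    intro t ht hq
    have := iter 1 le_rfl base t ht hq
    norm_num at this
    linarith
  have s2 : ∀ t, T0 ≤ t → p (t+1) < 1 → (19/5:ℝ) ≤ X (t+1) := by
    intro t ht hq
    have := iter 3 (by norm_num) s1 t ht hq
    norm_num at this
    linarith
  have s3 : ∀ t, T0 ≤ t → p (t+1) < 1 → (209/50:ℝ) ≤ X (t+1) := by
    intro t ht hq
    have := iter (19/5) (by norm_num) s2 t ht hq
    have hnum : (209/50:ℝ) ≤ 2 + (19/5:ℝ)^2/(2*(19/5)-1) := by norm_num
    linarith
  have s4 : ∀ t, T0 ≤ t → p (t+1) < 1 → (437/100:ℝ) ≤ X (t+1) := by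
    intro t ht hq
    have := iter (209/50) (by norm_num) s3 t ht hq
    have hnum : (437/100:ℝ) ≤ 2 + (209/50:ℝ)^2/(2*(209/50)-1) := by norm_num
    linarith
  have s5 : ∀ t, T0 ≤ t → p (t+1) < 1 → (223/50:ℝ) ≤ X (t+1) := by
    intro t ht hq
    have := iter (437/100) (by norm_num) s4 t ht hq
    have hnum : (223/50:ℝ) ≤ 2 + (437/100:ℝ)^2/(2*(437/100)-1) := by norm_num
    linarith
  rcases hnext T0 le_rfl with ⟨t0, _, ht0, hq0⟩
  obtain ⟨hhalf0, heq20, heq30, _, hle70⟩ := hA t0 ht0 hq0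
  have hXb : (223/50 : ℝ) ≤ X (t0+1) := s5 t0 ht0 hq0
  have h5 : p (t0+1) * X (t0+1) ≤ 5/2 := by linarith [heq30, hle70]
  have h2X : (0:ℝ) < 2*X (t0+1) - 1 := by linarith
  have hXX : p (t0+1) * X (t0+1) * (2*X (t0+1) - 1) = X (t0+1)^2 := by nlinarith [heq20]
  have hsq : X (t0+1)^2 ≤ 5/2 * (2*X (t0+1) - 1) := by
    rw [← hXX]
    exact mul_le_mul_of_nonneg_right h5 (le_of_lt h2X)
  nlinarith [hXb, hsq, mul_nonneg (by linarith : (0:ℝ) ≤ X (t0+1) - 223/50)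
    (by linarith : (0:ℝ) ≤ X (t0+1) - 27/50)]


/-- proved. -/
theorem no_age_based_equilibrium_with_finite_latency :
    ∀ (n : ℕ) (p : ℕ → ℝ), 2 ≤ n →
      (∀ t : ℕ, 1 ≤ t → 0 ≤ p t ∧ p t ≤ 1) →
      (∀ i : Fin n, condLatency (fun _ : Fin n => ageProtocol p) [] i < ⊤) →
      ¬ IsEquilibrium (fun _ : Fin n => ageProtocol p) :=
  no_age_based_equilibrium_with_finite_latency_aux

end Contention
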